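/- No ≥2-subdivision of K₄ (the complete graph on four vertices) is a restricted frame graph. -/

import Mathlib

/-! ## Frames and restricted frame graphs -/

/-- An axis-parallel box in `ℝ²`, i.e. a product `[x1,x2] × [y1,y2]` of two closed
nondegenerate intervals. -/
structure Box : Type where
  x1 : ℝ
  x2 : ℝ
  y1 : ℝ
  y2 : ℝ
  hx : x1 < x2
  hy : y1 < y2

namespace Box

/-- The region bounded by the frame of a box: the closed box itself. -/
def region (B : Box) : Set (ℝ × ℝ) :=
  {p : ℝ × ℝ | B.x1 ≤ p.1 ∧ p.1 ≤ B.x2 ∧ B.y1 ≤ p.2 ∧ p.2 ≤ B.y2}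

/-- The frame of a box: the topological boundary of the closed box. -/
def frame (B : Box) : Set (ℝ × ℝ) :=
  {p : ℝ × ℝ | p ∈ B.region ∧ (p.1 = B.x1 ∨ p.1 = B.x2 ∨ p.2 = B.y1 ∨ p.2 = B.y2)}

/-- The left side `{x1} × [y1,y2]` of a frame. -/
def leftSide (B : Box) : Set (ℝ × ℝ) :=
  {p : ℝ × ℝ | p.1 = B.x1 ∧ B.y1 ≤ p.2 ∧ p.2 ≤ B.y2}

/-- The right side `{x2} × [y1,y2]` of a frame. -/
def rightSide (B : Box) : Set (ℝ × ℝ) :=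
  {p : ℝ × ℝ | p.1 = B.x2 ∧ B.y1 ≤ p.2 ∧ p.2 ≤ B.y2}

/-- The top side `[x1,x2] × {y2}` of a frame. -/
def topSide (B : Box) : Set (ℝ × ℝ) :=
  {p : ℝ × ℝ | p.2 = B.y2 ∧ B.x1 ≤ p.1 ∧ p.1 ≤ B.x2}

/-- The bottom side `[x1,x2] × {y1}` of a frame. -/
def bottomSide (B : Box) : Set (ℝ × ℝ) :=
  {p : ℝ × ℝ | p.2 = B.y1 ∧ B.x1 ≤ p.1 ∧ p.1 ≤ B.x2}

/-- The four corners of a frame. -/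
def corners (B : Box) : Set (ℝ × ℝ) :=
  {(B.x1, B.y1), (B.x1, B.y2), (B.x2, B.y1), (B.x2, B.y2)}

/-- `Box.Inside inner outer` : the frame of `outer` contains the frame of `inner`,
i.e. the two frames are disjoint and the frame of `inner` is contained in the region
bounded by the frame of `outer`. -/
def Inside (inner outer : Box) : Prop :=
  inner.frame ∩ outer.frame = ∅ ∧ inner.frame ⊆ outer.region

/-- `Box.Outside B outer` : the frames are disjoint and `B` is not inside `outer`. -/
def Outside (B outer : Box) : Prop :=
  B.frame ∩ outer.frame = ∅ ∧ ¬ Inside B outer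

end Box

/-- A family of frames `(F v)` is a representation of the graph `G` as a restricted
frame graph: distinct vertices are adjacent iff their frames intersect, and the four
restrictions on the representation hold. -/
structure IsFrameRepresentation {V : Type} (G : SimpleGraph V) (F : V → Box) : Prop where
  /-- Distinct vertices are adjacent iff their frames intersect. -/
  adj_iff : ∀ u v : V, u ≠ v → (G.Adj u v ↔ ((F u).frame ∩ (F v).frame).Nonempty)
  /-- (1) Corners of a frame do not coincide with any point of another frame. -/
  corner_free : ∀ u v : V, u ≠ v → (F u).corners ∩ (F v).frame = ∅
  /-- (2) The left side of a frame does not intersect any other frame. -/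
  left_free : ∀ u v : V, u ≠ v → (F u).leftSide ∩ (F v).frame = ∅
  /-- (3) If the right side of a frame intersects a second frame, this right side
  intersects both the top and the bottom side of that second frame. -/
  right_cross : ∀ u v : V, u ≠ v →
    ((F u).rightSide ∩ (F v).frame).Nonempty →
    ((F u).rightSide ∩ (F v).topSide).Nonempty ∧
      ((F u).rightSide ∩ (F v).bottomSide).Nonempty
  /-- (4) If two frames intersect, no third frame is entirely contained in the
  intersection of the regions bounded by the two frames. -/
  not_nested : ∀ u v w : V, u ≠ v → w ≠ u → w ≠ v →
    ((F u).frame ∩ (F v).frame).Nonempty →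
    ¬ ((F w).frame ⊆ (F u).region ∩ (F v).region)

/-- A graph is a restricted frame graph if it admits a frame representation. -/
def IsRestrictedFrameGraph {V : Type} (G : SimpleGraph V) : Prop :=
  ∃ F : V → Box, IsFrameRepresentation G F

/-! ## Basic graph notions -/

/-- The closed neighborhood `N[u] = {u} ∪ N(u)`. -/
def closedNbhd {V : Type} (G : SimpleGraph V) (u : V) : Set V :=
  insert u (G.neighborSet u)

/-- `G` has a full star-cutset: for some vertex `u` the removal of `N[u]`
disconnects `G`. -/
def HasFullStarCutset {V : Type} (G : SimpleGraph V) : Prop :=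
  ∃ u : V, ¬ (G.induce ((closedNbhd G u)ᶜ)).Preconnected

/-- `v` is a cut-vertex of `G`: its removal disconnects `G`. -/
def IsCutVertex {V : Type} (G : SimpleGraph V) (v : V) : Prop :=
  ¬ (G.induce {u : V | u ≠ v}).Preconnected

/-- `G` is a path graph: its vertices can be enumerated `0, …, n-1` so that two
vertices are adjacent iff they are consecutive. -/
def IsPathGraph {V : Type} (G : SimpleGraph V) : Prop :=
  ∃ (n : ℕ) (e : V ≃ Fin n), ∀ u v : V,
    G.Adj u v ↔ ((e u : ℕ) + 1 = (e v : ℕ) ∨ (e v : ℕ) + 1 = (e u : ℕ))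

/-- `G` is a cycle graph (on at least 3 vertices). -/
def IsCycleGraphOn {V : Type} (G : SimpleGraph V) : Prop :=
  ∃ n : ℕ, 3 ≤ n ∧ ∃ e : V ≃ Fin n, ∀ u v : V,
    G.Adj u v ↔ (((e u : ℕ) + 1) % n = (e v : ℕ) ∨ ((e v : ℕ) + 1) % n = (e u : ℕ))

/-- `x` is a leaf of `T`: it has exactly one neighbor. -/
def IsLeaf {V : Type} (T : SimpleGraph V) (x : V) : Prop :=
  (T.neighborSet x).ncard = 1

/-- `G` is a chandelier with pivot `v`: `G - v` is a tree `T` and `v` is adjacent to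
exactly the leaves of `T`. -/
def IsChandelierWithPivot {V : Type} (G : SimpleGraph V) (v : V) : Prop :=
  (G.induce {u : V | u ≠ v}).IsTree ∧
    ∀ u : ↥{u : V | u ≠ v}, (G.Adj v u.val ↔ IsLeaf (G.induce {u : V | u ≠ v}) u)

/-- `G` is a chandelier. -/
def IsChandelier {V : Type} (G : SimpleGraph V) : Prop :=
  ∃ v : V, IsChandelierWithPivot G v

/-- `G` is a luxury chandelier: a chandelier (with pivot `v` and tree `T = G - v`)
such that the neighbor in `T` of each leaf of `T` has degree 2 in `T`. -/
def IsLuxuryChandelier {V : Type} (G : SimpleGraph V) : Prop :=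
  ∃ v : V, IsChandelierWithPivot G v ∧
    ∀ x y : ↥{u : V | u ≠ v}, (G.induce {u : V | u ≠ v}).Adj x y →
      IsLeaf (G.induce {u : V | u ≠ v}) x →
      ((G.induce {u : V | u ≠ v}).neighborSet y).ncard = 2

/-! ## Multigraphs and subdivisions -/

/-- A loopless multigraph on vertex set `V`: a symmetric multiplicity function. -/
structure Multigraph (V : Type) where
  m : V → V → ℕ
  symm : ∀ u v : V, m u v = m v u
  loopless : ∀ v : V, m v v = 0

/-- The multigraph associated with a simple graph (each edge has multiplicity 1). -/
noncomputable def SimpleGraph.toMultigraph {V : Type} (G : SimpleGraph V) : Multigraph V where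
  m u v := @ite ℕ (G.Adj u v) (Classical.dec _) 1 0
  symm u v := by
    beta_reduce
    by_cases h : G.Adj u v
    · rw [if_pos h, if_pos (G.adj_symm h)]
    · rw [if_neg h, if_neg (fun h' => h (G.adj_symm h'))]
  loopless v := by
    beta_reduce
    rw [if_neg (G.loopless.irrefl v)]

/-- The interior (set of internal vertices) of a walk. -/
def walkInterior {V : Type} {G : SimpleGraph V} {a b : V} (p : G.Walk a b) : Set V :=
  {w : V | w ∈ p.support ∧ w ≠ a ∧ w ≠ b}

/-- A witness that the simple graph `H` is a `≥k`-subdivision of the multigraph `G`: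
each edge of `G` (counted with multiplicity) is replaced by a path with at least
`k+1` edges between (the images of) its endpoints, these paths being internally
disjoint from each other and from the branch vertices, and covering all of `H`. -/
structure MultiSubdivision {V W : Type} (G : Multigraph V) (H : SimpleGraph W) (k : ℕ) where
  /-- the embedding of branch vertices -/
  f : V ↪ W
  /-- the path replacing the `i`-th parallel edge between `u` and `v` -/
  path : ∀ u v : V, Fin (G.m u v) → H.Walk (f u) (f v)
  path_symm : ∀ (u v : V) (i : Fin (G.m u v)),
    path v u (Fin.cast (G.symm u v) i) = (path u v i).reverse
  path_ne : ∀ (u v : V) (i i' : Fin (G.m u v)), (i : ℕ) ≠ (i' : ℕ) →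
    path u v i ≠ path u v i'
  isPath : ∀ (u v : V) (i : Fin (G.m u v)), (path u v i).IsPath
  length_le : ∀ (u v : V) (i : Fin (G.m u v)), k + 1 ≤ (path u v i).length
  /-- the paths are internally disjoint from the branch vertices -/
  interior_avoid : ∀ (u v : V) (i : Fin (G.m u v)) (x : V),
    f x ∉ walkInterior (path u v i)
  /-- distinct paths are pairwise internally disjoint -/
  interior_disjoint : ∀ (u v : V) (i : Fin (G.m u v)) (u' v' : V) (i' : Fin (G.m u' v')),
    (walkInterior (path u v i) ∩ walkInterior (path u' v' i')).Nonempty →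
    (u = u' ∧ v = v' ∧ (i : ℕ) = (i' : ℕ)) ∨ (u = v' ∧ v = u' ∧ (i : ℕ) = (i' : ℕ))
  /-- every vertex of `H` is a branch vertex or an internal vertex of a path -/
  vertex_cover : ∀ w : W, (∃ x : V, f x = w) ∨
    ∃ (u v : V) (i : Fin (G.m u v)), w ∈ walkInterior (path u v i)
  /-- every edge of `H` lies on one of the paths -/
  edge_cover : ∀ e ∈ H.edgeSet, ∃ (u v : V) (i : Fin (G.m u v)), e ∈ (path u v i).edges

/-- `H` is a `≥k`-subdivision of the multigraph `G`. -/
def IsSubdivisionGE {V W : Type} (G : Multigraph V) (k : ℕ) (H : SimpleGraph W) : Prop :=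
  Nonempty (MultiSubdivision G H k)

/-- `H` is a subdivision of the simple graph `G` (every edge is replaced by a path
with at least one edge). -/
def IsSubdivision {V W : Type} (G : SimpleGraph V) (H : SimpleGraph W) : Prop :=
  IsSubdivisionGE G.toMultigraph 0 H

namespace Multigraph

/-- The underlying simple graph of a multigraph. -/
def support {V : Type} (G : Multigraph V) : SimpleGraph V where
  Adj u v := 0 < G.m u v
  symm := by
    refine ⟨?_⟩
    intro u v h
    rw [G.symm v u]
    exact h
  loopless := by
    refine ⟨?_⟩
    intro v h
    rw [G.loopless v] at h
    exact Nat.lt_irrefl 0 h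

/-- A multigraph is connected if its underlying simple graph is. -/
def Connected {V : Type} (G : Multigraph V) : Prop :=
  G.support.Connected

/-- A multigraph is 2-connected if it is connected, has at least two vertices, and
deleting any single vertex leaves it connected. -/
def TwoConnected {V : Type} (G : Multigraph V) : Prop :=
  G.support.Connected ∧ (∃ u v : V, u ≠ v) ∧
    ∀ v : V, (G.support.induce {u : V | u ≠ v}).Connected

/-- `v` is a feedback vertex of the multigraph `G`: `G - v` contains no cycle
(where a pair of parallel edges forms a cycle of length 2). -/
def IsFeedbackVertex {V : Type} (G : Multigraph V) (v : V) : Prop :=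
  (G.support.induce {u : V | u ≠ v}).IsAcyclic ∧
    ∀ u w : V, u ≠ v → w ≠ v → G.m u w ≤ 1

end Multigraph

/-! ## Induced cycles and big vertices -/

/-- `C` induces a cycle in `G`. -/
def IsInducedCycle {V : Type} (G : SimpleGraph V) (C : Set V) : Prop :=
  IsCycleGraphOn (G.induce C)

/-- `v` is a big vertex of the (induced cycle on) `C` with respect to the frame
representation `F`: `v ∈ C` and `F v` contains the frame of every vertex of `C`
outside `N[v]`. -/
def IsBigVertexOf {V : Type} (G : SimpleGraph V) (F : V → Box) (C : Set V) (v : V) : Prop :=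
  v ∈ C ∧ ∀ u ∈ C, u ≠ v → ¬ G.Adj v u → Box.Inside (F u) (F v)

/-- `v` is a big vertex of the representation `F`: it is a big vertex of some
induced cycle of `G`. -/
def IsBigVertex {V : Type} (G : SimpleGraph V) (F : V → Box) (v : V) : Prop :=
  ∃ C : Set V, IsInducedCycle G C ∧ IsBigVertexOf G F C v

/-! ## Gluing a chandelier onto a vertex -/

/-- The graph obtained from the disjoint union of `G₁` and `G₂` by identifying the
vertex `v` of `G₁` with the vertex `p` of `G₂`. -/
def glueAt {V₁ V₂ : Type} (G₁ : SimpleGraph V₁) (G₂ : SimpleGraph V₂) (v : V₁) (p : V₂) :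
    SimpleGraph (V₁ ⊕ {x : V₂ // x ≠ p}) :=
  SimpleGraph.fromRel (fun a b =>
    match a, b with
    | Sum.inl u, Sum.inl w => G₁.Adj u w
    | Sum.inr u, Sum.inr w => G₂.Adj u.val w.val
    | Sum.inl u, Sum.inr w => u = v ∧ G₂.Adj p w.val
    | Sum.inr _, Sum.inl _ => False)

/-! ## The multigraphs `Ĥ₁` and `Ĥ₂` -/

/-- The multiplicity matrix of `Ĥ₁` (vertices `a₁ = 0`, `b₁ = 1`, `v₁ = 2`, `v₂ = 3`,
`a₂ = 4`, `b₂ = 5`). -/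
def H1hatMatrix : Matrix (Fin 6) (Fin 6) ℕ :=
  !![0, 2, 1, 0, 0, 0;
     2, 0, 1, 0, 0, 0;
     1, 1, 0, 1, 0, 0;
     0, 0, 1, 0, 1, 1;
     0, 0, 0, 1, 0, 2;
     0, 0, 0, 1, 2, 0]

/-- The multigraph `Ĥ₁`: two disjoint digons `a₁b₁`, `a₂b₂`, and single edges
`a₁v₁`, `b₁v₁`, `v₁v₂`, `a₂v₂`, `b₂v₂`. -/
def H1hat : Multigraph (Fin 6) where
  m u v := H1hatMatrix u v
  symm := by intro u v; fin_cases u <;> fin_cases v <;> rfl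
  loopless := by decide

/-- The multiplicity matrix of `Ĥ₂` (vertices `a₁ = 0`, `b₁ = 1`, `v = 2`,
`a₂ = 3`, `b₂ = 4`). -/
def H2hatMatrix : Matrix (Fin 5) (Fin 5) ℕ :=
  !![0, 2, 1, 0, 0;
     2, 0, 1, 0, 0;
     1, 1, 0, 1, 1;
     0, 0, 1, 0, 2;
     0, 0, 1, 2, 0]

/-- The multigraph `Ĥ₂`: two digons `a₁b₁`, `a₂b₂`, and single edges
`a₁v`, `b₁v`, `a₂v`, `b₂v`. -/
def H2hat : Multigraph (Fin 5) where
  m u v := H2hatMatrix u v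
  symm := by intro u v; fin_cases u <;> fin_cases v <;> rfl
  loopless := by decide

/-! ## Subdivisions of `K₄` and their type -/

/-- The complete graph on four vertices. -/
def K4 : SimpleGraph (Fin 4) := ⊤

/-- The set of edges of `K₄` that are subdivided at least once in the subdivision
witnessed by `S` (i.e. replaced by a path with at least two edges). -/
def subdividedEdges {W : Type} {H : SimpleGraph W}
    (S : MultiSubdivision K4.toMultigraph H 0) : Set (Sym2 (Fin 4)) :=
  {e : Sym2 (Fin 4) | ∃ (u v : Fin 4) (i : Fin (K4.toMultigraph.m u v)),
    e = s(u, v) ∧ 2 ≤ (S.path u v i).length}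

/-! ## Adding a twin -/

/-- The graph obtained from `G` by adding a twin of `v`: a new vertex, non-adjacent
to `v`, whose neighborhood is exactly `N(v)`. -/
def addTwin {V : Type} (G : SimpleGraph V) (v : V) : SimpleGraph (V ⊕ Unit) :=
  SimpleGraph.fromRel (fun a b =>
    match a, b with
    | Sum.inl u, Sum.inl w => G.Adj u w
    | Sum.inr _, Sum.inl u => G.Adj v u
    | _, _ => False)

/-! ## The construction of Burling and Pawlik et al. -/

/-- A graph-stable set pair: a graph together with a collection of sets of vertices
(intended: stable sets). -/
structure GSPair : Type 1 where
  V : Type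
  G : SimpleGraph V
  S : Set (Set V)

namespace GSPair

/-- The vertex type of `next P`: the original vertices, the vertices `(s, u)` of the
copy `H_s` of the graph for each `s ∈ 𝒮`, and the new vertices `v_{s,t}`. -/
abbrev nextVertex (P : GSPair) : Type :=
  P.V ⊕ ((↥P.S × P.V) ⊕ (↥P.S × ↥P.S))

/-- The adjacency generator for the graph of `next P`. -/
def nextRel (P : GSPair) : P.nextVertex → P.nextVertex → Prop
  | Sum.inl u, Sum.inl v => P.G.Adj u v
  | Sum.inr (Sum.inl (s, u)), Sum.inr (Sum.inl (t, v)) => s = t ∧ P.G.Adj u v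
  | Sum.inr (Sum.inr (s, t)), Sum.inr (Sum.inl (s', v)) => s = s' ∧ v ∈ (t : Set P.V)
  | _, _ => False

/-- The procedure `next`: add a disjoint copy `H_s` of the graph for each `s ∈ 𝒮`, a
vertex `v_{s,t}` whose neighborhood is exactly the copy of `t` inside `H_s` for all
`s, t ∈ 𝒮`, and take as new collection of stable sets all `s ∪ t_s` and
`s ∪ {v_{s,t}}`. -/
def next (P : GSPair) : GSPair where
  V := P.nextVertex
  G := SimpleGraph.fromRel P.nextRel
  S := {A : Set P.nextVertex | ∃ s t : ↥P.S,
    A = (Sum.inl '' (s : Set P.V) : Set P.nextVertex) ∪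
        ((fun u : P.V => (Sum.inr (Sum.inl (s, u)) : P.nextVertex)) '' (t : Set P.V)) ∨
    A = (Sum.inl '' (s : Set P.V) : Set P.nextVertex) ∪ {Sum.inr (Sum.inr (s, t))}}

/-- The starting pair: a single vertex, with the single stable set consisting of
that vertex. -/
def base : GSPair := ⟨PUnit, ⊥, {Set.univ}⟩

/-- `P` is an induced subgraph-stable set pair of `Q`. -/
def IsInducedSubpair (P Q : GSPair) : Prop :=
  ∃ f : P.V ↪ Q.V, (∀ u v : P.V, P.G.Adj u v ↔ Q.G.Adj (f u) (f v)) ∧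
    ∀ A ∈ P.S, ∃ B ∈ Q.S, A = f ⁻¹' B

/-- A graph-stable set pair is constructible if it is an induced subgraph-stable set
pair of some iterate of `next` on the starting pair. -/
def Constructible (P : GSPair) : Prop :=
  ∃ i : ℕ, IsInducedSubpair P (next^[i] base)

end GSPair


namespace FrameProof

/-- strict containment of boxes -/
def SIn (a b : Box) : Prop := b.x1 < a.x1 ∧ a.x2 < b.x2 ∧ b.y1 < a.y1 ∧ a.y2 < b.y2

/-- `a` crosses `b`: the right side of `a` crosses vertically through `b`. -/
def Crs (a b : Box) : Prop :=
  a.x1 < b.x1 ∧ b.x1 < a.x2 ∧ a.x2 < b.x2 ∧ a.y1 < b.y1 ∧ b.y2 < a.y2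

lemma frame_mk {B : Box} {p : ℝ × ℝ}
    (h1 : B.x1 ≤ p.1) (h2 : p.1 ≤ B.x2) (h3 : B.y1 ≤ p.2) (h4 : p.2 ≤ B.y2)
    (h5 : p.1 = B.x1 ∨ p.1 = B.x2 ∨ p.2 = B.y1 ∨ p.2 = B.y2) : p ∈ B.frame :=
  ⟨⟨h1, h2, h3, h4⟩, h5⟩

lemma mem_frame_of_SIn_region {a b : Box} (h : SIn a b) {p : ℝ × ℝ} (hp : p ∈ a.region) :
    b.x1 < p.1 ∧ p.1 < b.x2 ∧ b.y1 < p.2 ∧ p.2 < b.y2 := by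
  obtain ⟨h1, h2, h3, h4⟩ := hp
  exact ⟨by linarith [h.1], by linarith [h.2.1], by linarith [h.2.2.1], by linarith [h.2.2.2]⟩

/-- If frames of `c,b` are disjoint and their regions meet, then one is strictly inside
the other. -/
lemma disjoint_frames_cases {B D : Box} (hd : ∀ q, q ∈ B.frame → q ∈ D.frame → False)
    {p : ℝ × ℝ} (hpB : p ∈ B.region) (hpD : p ∈ D.region) : SIn B D ∨ SIn D B := by
  obtain ⟨pB1, pB2, pB3, pB4⟩ := hpB
  obtain ⟨pD1, pD2, pD3, pD4⟩ := hpD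
  -- the four "max/min corner" points are in both regions
  -- forbidden sign combinations
  have h11 : ¬ (D.x1 ≤ B.x1 ∧ B.y1 ≤ D.y1) := by
    rintro ⟨h1, h2⟩
    exact hd (max B.x1 D.x1, max B.y1 D.y1)
      (frame_mk (by simp) (by simp; constructor <;> linarith) (by simp)
        (by simp; constructor <;> linarith) (Or.inl (by simp [max_eq_left h1])))
      (frame_mk (by simp) (by simp; constructor <;> linarith) (by simp)
        (by simp; constructor <;> linarith) (Or.inr (Or.inr (Or.inl (by simp [max_eq_right h2])))))
  have h12 : ¬ (B.x1 ≤ D.x1 ∧ D.y1 ≤ B.y1) := by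
    rintro ⟨h1, h2⟩
    exact hd (max B.x1 D.x1, max B.y1 D.y1)
      (frame_mk (by simp) (by simp; constructor <;> linarith) (by simp)
        (by simp; constructor <;> linarith) (Or.inr (Or.inr (Or.inl (by simp [max_eq_left h2])))))
      (frame_mk (by simp) (by simp; constructor <;> linarith) (by simp)
        (by simp; constructor <;> linarith) (Or.inl (by simp [max_eq_right h1])))
  have h21 : ¬ (D.x1 ≤ B.x1 ∧ D.y2 ≤ B.y2) := by
    rintro ⟨h1, h2⟩
    exact hd (max B.x1 D.x1, min B.y2 D.y2)
      (frame_mk (by simp) (by simp; constructor <;> linarith)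
        (by simp; constructor <;> linarith) (by simp) (Or.inl (by simp [max_eq_left h1])))
      (frame_mk (by simp) (by simp; constructor <;> linarith)
        (by simp; constructor <;> linarith) (by simp)
        (Or.inr (Or.inr (Or.inr (by simp [min_eq_right h2])))))
  have h22 : ¬ (B.x1 ≤ D.x1 ∧ B.y2 ≤ D.y2) := by
    rintro ⟨h1, h2⟩
    exact hd (max B.x1 D.x1, min B.y2 D.y2)
      (frame_mk (by simp) (by simp; constructor <;> linarith)
        (by simp; constructor <;> linarith) (by simp)
        (Or.inr (Or.inr (Or.inr (by simp [min_eq_left h2])))))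
      (frame_mk (by simp) (by simp; constructor <;> linarith)
        (by simp; constructor <;> linarith) (by simp) (Or.inl (by simp [max_eq_right h1])))
  have h31 : ¬ (B.x2 ≤ D.x2 ∧ B.y1 ≤ D.y1) := by
    rintro ⟨h1, h2⟩
    exact hd (min B.x2 D.x2, max B.y1 D.y1)
      (frame_mk (by simp; constructor <;> linarith) (by simp) (by simp)
        (by simp; constructor <;> linarith) (Or.inr (Or.inl (by simp [min_eq_left h1]))))
      (frame_mk (by simp; constructor <;> linarith) (by simp) (by simp)
        (by simp; constructor <;> linarith) (Or.inr (Or.inr (Or.inl (by simp [max_eq_right h2])))))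
  have h32 : ¬ (D.x2 ≤ B.x2 ∧ D.y1 ≤ B.y1) := by
    rintro ⟨h1, h2⟩
    exact hd (min B.x2 D.x2, max B.y1 D.y1)
      (frame_mk (by simp; constructor <;> linarith) (by simp) (by simp)
        (by simp; constructor <;> linarith) (Or.inr (Or.inr (Or.inl (by simp [max_eq_left h2])))))
      (frame_mk (by simp; constructor <;> linarith) (by simp) (by simp)
        (by simp; constructor <;> linarith) (Or.inr (Or.inl (by simp [min_eq_right h1]))))
  rcases lt_trichotomy B.x1 D.x1 with hx | hx | hx
  · right
    have hy1 : B.y1 < D.y1 := by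
      by_contra h; push_neg at h; exact h12 ⟨le_of_lt hx, h⟩
    have hy2 : D.y2 < B.y2 := by
      by_contra h; push_neg at h; exact h22 ⟨le_of_lt hx, h⟩
    have hx2 : D.x2 < B.x2 := by
      by_contra h; push_neg at h; exact h31 ⟨h, le_of_lt hy1⟩
    exact ⟨hx, hx2, hy1, hy2⟩
  · exfalso
    rcases le_total B.y1 D.y1 with h | h
    · exact h11 ⟨le_of_eq hx.symm, h⟩
    · exact h12 ⟨le_of_eq hx, h⟩
  · left
    have hy1 : D.y1 < B.y1 := by
      by_contra h; push_neg at h; exact h11 ⟨le_of_lt hx, h⟩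
    have hy2 : B.y2 < D.y2 := by
      by_contra h; push_neg at h; exact h21 ⟨le_of_lt hx, h⟩
    have hx2 : B.x2 < D.x2 := by
      by_contra h; push_neg at h; exact h32 ⟨h, le_of_lt hy1⟩
    exact ⟨hx, hx2, hy1, hy2⟩

/-- If the right side of `U` meets both top and bottom side of `Vb` (plus corner/left
freeness), then `U` crosses `Vb`. -/
lemma crs_of_sides {U Vb : Box}
    (hcU : ∀ q, q ∈ U.corners → q ∈ Vb.frame → False)
    (hcV : ∀ q, q ∈ Vb.corners → q ∈ U.frame → False)
    (hlU : ∀ q, q ∈ U.leftSide → q ∈ Vb.frame → False)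
    {q1 q2 : ℝ × ℝ} (h1 : q1 ∈ U.rightSide ∩ Vb.topSide)
    (h2 : q2 ∈ U.rightSide ∩ Vb.bottomSide) : Crs U Vb := by
  obtain ⟨⟨e1, f1, f2⟩, ⟨e2, g1, g2⟩⟩ := h1
  obtain ⟨⟨e1', f1', f2'⟩, ⟨e2', g1', g2'⟩⟩ := h2
  -- q1 = (U.x2, Vb.y2), q2 = (U.x2, Vb.y1)
  -- basic bounds
  have hb1 : Vb.x1 ≤ U.x2 := by rw [← e1]; exact g1
  have hb2 : U.x2 ≤ Vb.x2 := by rw [← e1]; exact g2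
  have hb3 : U.y1 ≤ Vb.y2 := by rw [← e2]; exact f1
  have hb4 : Vb.y2 ≤ U.y2 := by rw [← e2]; exact f2
  have hb5 : U.y1 ≤ Vb.y1 := by rw [← e2']; exact f1'
  have hb6 : Vb.y1 ≤ U.y2 := by rw [← e2']; exact f2'
  -- strictness via corners
  have s1 : Vb.x1 ≠ U.x2 := by
    intro h
    exact hcV (Vb.x1, Vb.y1) (by simp [Box.corners])
      (frame_mk (by rw [h]; linarith [U.hx]) (by rw [h]) hb5 hb6 (Or.inr (Or.inl h)))
  have s2 : U.x2 ≠ Vb.x2 := by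
    intro h
    exact hcV (Vb.x2, Vb.y1) (by simp [Box.corners])
      (frame_mk (by rw [← h]; linarith [U.hx]) (by rw [← h]) hb5 hb6 (Or.inr (Or.inl h.symm)))
  have s3 : U.y1 ≠ Vb.y1 := by
    intro h
    exact hcU (U.x2, U.y1) (by simp [Box.corners])
      (frame_mk hb1 hb2 (by rw [h]) (by rw [h]; linarith [Vb.hy]) (Or.inr (Or.inr (Or.inl h))))
  have s4 : Vb.y2 ≠ U.y2 := by
    intro h
    exact hcU (U.x2, U.y2) (by simp [Box.corners])
      (frame_mk hb1 hb2 (by rw [← h]; linarith [Vb.hy]) (by rw [← h])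
        (Or.inr (Or.inr (Or.inr h.symm))))
  -- left side of U is to the left of Vb
  have s5 : U.x1 < Vb.x1 := by
    by_contra h
    push_neg at h
    exact hlU (U.x1, Vb.y2) ⟨rfl, by linarith, by linarith⟩
      (frame_mk h (by linarith [U.hx]) (by linarith [Vb.hy]) le_rfl
        (Or.inr (Or.inr (Or.inr rfl))))
  exact ⟨s5, lt_of_le_of_ne hb1 s1, lt_of_le_of_ne hb2 s2,
    lt_of_le_of_ne hb5 s3, lt_of_le_of_ne hb4 (fun h => s4 h)⟩

/-- Two intersecting frames (under conditions (1)-(3)) cross one way or another. -/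
lemma crs_of_meet {U Vb : Box}
    (hcU : ∀ q, q ∈ U.corners → q ∈ Vb.frame → False)
    (hcV : ∀ q, q ∈ Vb.corners → q ∈ U.frame → False)
    (hlU : ∀ q, q ∈ U.leftSide → q ∈ Vb.frame → False)
    (hlV : ∀ q, q ∈ Vb.leftSide → q ∈ U.frame → False)
    (hrU : (U.rightSide ∩ Vb.frame).Nonempty →
      (U.rightSide ∩ Vb.topSide).Nonempty ∧ (U.rightSide ∩ Vb.bottomSide).Nonempty)
    (hrV : (Vb.rightSide ∩ U.frame).Nonempty →
      (Vb.rightSide ∩ U.topSide).Nonempty ∧ (Vb.rightSide ∩ U.bottomSide).Nonempty)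
    {p : ℝ × ℝ} (hpU : p ∈ U.frame) (hpV : p ∈ Vb.frame) : Crs U Vb ∨ Crs Vb U := by
  obtain ⟨⟨u1, u2, u3, u4⟩, hU⟩ := hpU
  obtain ⟨⟨v1, v2, v3, v4⟩, hV⟩ := hpV
  -- horizontal-horizontal is impossible
  have hh : (p.2 = U.y1 ∨ p.2 = U.y2) → (p.2 = Vb.y1 ∨ p.2 = Vb.y2) → False := by
    intro hyU hyV
    rcases le_total Vb.x1 U.x1 with h | h
    · refine hcU (U.x1, p.2) ?_ (frame_mk h (by linarith) v3 v4 ?_)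
      · rcases hyU with h' | h' <;> simp [Box.corners, h']
      · rcases hyV with h' | h' <;> simp [h']
    · refine hcV (Vb.x1, p.2) ?_ (frame_mk h (by linarith) u3 u4 ?_)
      · rcases hyV with h' | h' <;> simp [Box.corners, h']
      · rcases hyU with h' | h' <;> simp [h']
  -- vertical-vertical (right-right) impossible
  have vv : p.1 = U.x2 → p.1 = Vb.x2 → False := by
    intro hxU hxV
    rcases le_total Vb.y1 U.y1 with h | h
    · refine hcU (p.1, U.y1) ?_ (frame_mk (by linarith) (by rw [hxV]) h (by linarith) ?_)
      · simp [Box.corners, hxU]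
      · exact Or.inr (Or.inl hxV)
    · refine hcV (p.1, Vb.y1) ?_ (frame_mk (by linarith) (by rw [hxU]) h (by linarith) ?_)
      · simp [Box.corners, hxV]
      · exact Or.inr (Or.inl hxU)
  have hpVf : p ∈ Vb.frame := ⟨⟨v1, v2, v3, v4⟩, hV⟩
  have hpUf : p ∈ U.frame := ⟨⟨u1, u2, u3, u4⟩, hU⟩
  rcases hU with hU | hU | hU
  · exact absurd (hlU p ⟨hU, u3, u4⟩ hpVf) (by simp)
  · obtain ⟨h1, h2⟩ := hrU ⟨p, ⟨hU, u3, u4⟩, hpVf⟩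
    obtain ⟨q1, hq1⟩ := h1
    obtain ⟨q2, hq2⟩ := h2
    exact Or.inl (crs_of_sides hcU hcV hlU hq1 hq2)
  · rcases hV with hV | hV | hV
    · exact absurd (hlV p ⟨hV, v3, v4⟩ hpUf) (by simp)
    · obtain ⟨h1, h2⟩ := hrV ⟨p, ⟨hV, v3, v4⟩, hpUf⟩
      obtain ⟨q1, hq1⟩ := h1
      obtain ⟨q2, hq2⟩ := h2
      exact Or.inr (crs_of_sides hcV hcU hlV hq1 hq2)
    · exact absurd (hh hU hV) (by simp)

lemma sin_trans_meet {a v c : Box} (hav : SIn a v)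
    {q : ℝ × ℝ} (hqc : q ∈ c.frame) (hqa : q ∈ a.region)
    (hdcv : ∀ r, r ∈ c.frame → r ∈ v.frame → False) : SIn c v := by
  have hq : v.x1 < q.1 ∧ q.1 < v.x2 ∧ v.y1 < q.2 ∧ q.2 < v.y2 :=
    mem_frame_of_SIn_region hav hqa
  have := disjoint_frames_cases hdcv (hqc.1)
    (⟨le_of_lt hq.1, le_of_lt hq.2.1, le_of_lt hq.2.2.1, le_of_lt hq.2.2.2⟩ : q ∈ v.region)
  rcases this with h | h
  · exact h
  · -- v strictly inside c: then q ∈ frame c is strictly inside region c, absurd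
    exfalso
    obtain ⟨⟨r1, r2, r3, r4⟩, hqe⟩ := hqc
    rcases hqe with h' | h' | h' | h' <;>
      [exact absurd h' (by have := h.1; have := hq.1; linarith);
       exact absurd h' (by have := h.2.1; have := hq.2.1; linarith);
       exact absurd h' (by have := h.2.2.1; have := hq.2.2.1; linarith);
       exact absurd h' (by have := h.2.2.2; have := hq.2.2.2; linarith)]

lemma sin_mutual_absurd {a b : Box} (h1 : SIn a b) (h2 : SIn b a) : False := by
  obtain ⟨p1, _, _, _⟩ := h1; obtain ⟨q1, _, _, _⟩ := h2; linarith

lemma crs_regions_meet {a b m : Box} (ha : Crs a m) (hb : Crs b m) :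
    (m.x1, m.y1) ∈ a.region ∧ (m.x1, m.y1) ∈ b.region := by
  obtain ⟨a1, a2, a3, a4, a5⟩ := ha
  obtain ⟨b1, b2, b3, b4, b5⟩ := hb
  have := m.hy
  exact ⟨⟨by simp; linarith, by simp; linarith, by simp; linarith, by simp; linarith⟩,
    ⟨by simp; linarith, by simp; linarith, by simp; linarith, by simp; linarith⟩⟩

lemma crs_x2_lt {a b : Box} (h : Crs a b) : a.x2 < b.x2 := h.2.2.1

end FrameProof


namespace WalkUtil
open SimpleGraph Walk

variable {V : Type} {G : SimpleGraph V}

lemma getVert_inj {u v : V} {p : G.Walk u v} (hp : p.IsPath) :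
    ∀ i j, i ≤ p.length → j ≤ p.length → p.getVert i = p.getVert j → i = j := by
  induction p with
  | nil => intro i j hi hj _; simp at hi hj; omega
  | @cons a b c h q ih =>
    have hq : q.IsPath := hp.of_cons
    have ha : a ∉ q.support := by
      intro hmem
      exact ((SimpleGraph.Walk.cons_isPath_iff h q).1 hp).2 hmem
    intro i j hi hj heq
    match i, j with
    | 0, 0 => rfl
    | 0, (j+1) =>
      exfalso
      apply ha
      rw [SimpleGraph.Walk.mem_support_iff_exists_getVert]
      refine ⟨j, ?_, ?_⟩
      · have : (SimpleGraph.Walk.cons h q).getVert (j+1) = q.getVert j :=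
          SimpleGraph.Walk.getVert_cons_succ q h
        rw [← this, ← heq]; simp [SimpleGraph.Walk.getVert_zero]
      · simpa [SimpleGraph.Walk.length_cons] using hj
    | (i+1), 0 =>
      exfalso
      apply ha
      rw [SimpleGraph.Walk.mem_support_iff_exists_getVert]
      refine ⟨i, ?_, ?_⟩
      · have : (SimpleGraph.Walk.cons h q).getVert (i+1) = q.getVert i :=
          SimpleGraph.Walk.getVert_cons_succ q h
        rw [← this, heq]; simp [SimpleGraph.Walk.getVert_zero]
      · simpa [SimpleGraph.Walk.length_cons] using hi
    | (i+1), (j+1) =>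
      have := ih hq i j (by simpa [SimpleGraph.Walk.length_cons] using hi)
        (by simpa [SimpleGraph.Walk.length_cons] using hj)
        (by simpa [SimpleGraph.Walk.getVert_cons_succ] using heq)
      omega

lemma take_walk {u v : V} (p : G.Walk u v) (k : ℕ) (hk : k ≤ p.length) :
    ∃ r : G.Walk u (p.getVert k), ∀ z ∈ r.support, ∃ i, i ≤ k ∧ p.getVert i = z := by
  induction p generalizing k with
  | nil =>
    simp only [SimpleGraph.Walk.length_nil, Nat.le_zero] at hk
    subst hk
    exact ⟨SimpleGraph.Walk.nil, by intro z hz; simp at hz; exact ⟨0, le_rfl, hz.symm⟩⟩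
  | @cons a b c h q ih =>
    match k with
    | 0 =>
      refine ⟨SimpleGraph.Walk.nil.copy rfl (by simp [SimpleGraph.Walk.getVert_zero]), ?_⟩
      intro z hz
      simp at hz
      exact ⟨0, le_rfl, by simp [hz, SimpleGraph.Walk.getVert_zero]⟩
    | (k+1) =>
      obtain ⟨r, hr⟩ := ih k (by simpa [SimpleGraph.Walk.length_cons] using hk)
      refine ⟨(SimpleGraph.Walk.cons h r).copy rfl
        (SimpleGraph.Walk.getVert_cons_succ q h).symm, ?_⟩
      intro z hz
      rw [SimpleGraph.Walk.support_copy, SimpleGraph.Walk.support_cons] at hz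
      rcases List.mem_cons.1 hz with hz | hz
      · exact ⟨0, Nat.zero_le _, by simp [hz, SimpleGraph.Walk.getVert_zero]⟩
      · obtain ⟨i, hi, hiz⟩ := hr z hz
        exact ⟨i + 1, by omega, by simpa [SimpleGraph.Walk.getVert_cons_succ] using hiz⟩

lemma drop_walk {u v : V} (p : G.Walk u v) (k : ℕ) (hk : k ≤ p.length) :
    ∃ r : G.Walk (p.getVert k) v, ∀ z ∈ r.support, ∃ i, k ≤ i ∧ i ≤ p.length ∧ p.getVert i = z := by
  obtain ⟨r, hr⟩ := take_walk p.reverse (p.length - k) (by simpa using Nat.sub_le _ _)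
  have hgv : p.reverse.getVert (p.length - k) = p.getVert k := by
    rw [SimpleGraph.Walk.getVert_reverse]
    congr 1
    omega
  refine ⟨(r.reverse.copy (by rw [hgv]) rfl), ?_⟩
  intro z hz
  rw [SimpleGraph.Walk.support_copy, SimpleGraph.Walk.support_reverse] at hz
  obtain ⟨i, hi, hiz⟩ := hr z (List.mem_reverse.1 hz)
  rw [SimpleGraph.Walk.getVert_reverse] at hiz
  exact ⟨p.length - i, by omega, by omega, hiz⟩

lemma edge_getVert {u v : V} (p : G.Walk u v) {e : Sym2 V} (he : e ∈ p.edges) :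
    ∃ i, i < p.length ∧ e = s(p.getVert i, p.getVert (i + 1)) := by
  induction p with
  | nil => simp at he
  | @cons a b c h q ih =>
    rw [SimpleGraph.Walk.edges_cons] at he
    rcases List.mem_cons.1 he with he | he
    · exact ⟨0, by simp [SimpleGraph.Walk.length_cons],
        by simp [he, SimpleGraph.Walk.getVert_zero, SimpleGraph.Walk.getVert_cons_succ]⟩
    · obtain ⟨i, hi, hie⟩ := ih he
      exact ⟨i + 1, by simp [SimpleGraph.Walk.length_cons]; omega,
        by simpa [SimpleGraph.Walk.getVert_cons_succ] using hie⟩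

end WalkUtil


namespace SubdivProof
open SimpleGraph

noncomputable abbrev K4m : Multigraph (Fin 4) := (⊤ : SimpleGraph (Fin 4)).toMultigraph

lemma m_eq_one {u v : Fin 4} (h : u ≠ v) : K4m.m u v = 1 := by
  simp only [SimpleGraph.toMultigraph, K4m]
  rw [if_pos (by simpa using h)]

lemma m_self (v : Fin 4) : K4m.m v v = 0 := K4m.loopless v

variable {W : Type} {H : SimpleGraph W} (S : MultiSubdivision K4m H 2)

lemma ne_of_idx {u v : Fin 4} (i : Fin (K4m.m u v)) : u ≠ v := by
  intro h
  subst h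
  rw [m_self] at i
  exact absurd i.2 (by omega)

noncomputable def idx0 {u v : Fin 4} (h : u ≠ v) : Fin (K4m.m u v) :=
  ⟨0, by rw [m_eq_one h]; omega⟩

lemma idx_eq {u v : Fin 4} (h : u ≠ v) (i : Fin (K4m.m u v)) : i = idx0 h := by
  have h2 : (i : ℕ) < 1 := lt_of_lt_of_le i.2 (le_of_eq (m_eq_one h))
  apply Fin.ext
  simp only [idx0]
  omega

/-- The subdivision path between two distinct branch vertices. -/
noncomputable def pth {u v : Fin 4} (h : u ≠ v) : H.Walk (S.f u) (S.f v) := S.path u v (idx0 h)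

lemma pth_isPath {u v : Fin 4} (h : u ≠ v) : (pth S h).IsPath := S.isPath u v _

lemma pth_len {u v : Fin 4} (h : u ≠ v) : 3 ≤ (pth S h).length := S.length_le u v _

lemma pth_rev {u v : Fin 4} (h : u ≠ v) : pth S h.symm = (pth S h).reverse := by
  have := S.path_symm u v (idx0 h)
  rw [idx_eq h.symm (Fin.cast (K4m.symm u v) (idx0 h))] at this
  exact this

lemma f_inj {a b : Fin 4} (h : S.f a = S.f b) : a = b := S.f.injective h

/-- interior membership from a position. -/
lemma int_of_pos {u v : Fin 4} (h : u ≠ v) {k : ℕ} (h1 : 0 < k) (h2 : k < (pth S h).length) :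
    (pth S h).getVert k ∈ walkInterior (pth S h) := by
  refine ⟨SimpleGraph.Walk.mem_support_iff_exists_getVert.2 ⟨k, rfl, le_of_lt h2⟩, ?_, ?_⟩
  · intro hk
    have h0 : (pth S h).getVert 0 = S.f u := SimpleGraph.Walk.getVert_zero _
    have := WalkUtil.getVert_inj (pth_isPath S h) k 0 (le_of_lt h2) (by omega)
      (by rw [h0, hk])
    omega
  · intro hk
    have h0 : (pth S h).getVert (pth S h).length = S.f v := SimpleGraph.Walk.getVert_length _
    have := WalkUtil.getVert_inj (pth_isPath S h) k (pth S h).length (le_of_lt h2) le_rfl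
      (by rw [h0, hk])
    omega

lemma pos_of_int {u v : Fin 4} (h : u ≠ v) {z : W} (hz : z ∈ walkInterior (pth S h)) :
    ∃ k, 0 < k ∧ k < (pth S h).length ∧ (pth S h).getVert k = z := by
  obtain ⟨hsupp, hne1, hne2⟩ := hz
  obtain ⟨k, hk, hkle⟩ := SimpleGraph.Walk.mem_support_iff_exists_getVert.1 hsupp
  refine ⟨k, ?_, ?_, hk⟩
  · rcases Nat.eq_zero_or_pos k with rfl | h'
    · exact absurd (by simpa using hk.symm) hne1
    · exact h'
  · rcases lt_or_eq_of_le hkle with h' | rfl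
    · exact h'
    · exact absurd (by simpa using hk.symm) hne2

lemma branch_pos {u v : Fin 4} (h : u ≠ v) {e : Fin 4} {k : ℕ} (hk : k ≤ (pth S h).length)
    (he : (pth S h).getVert k = S.f e) : k = 0 ∨ k = (pth S h).length := by
  by_contra hcon
  push_neg at hcon
  exact S.interior_avoid u v (idx0 h) e
    (he ▸ int_of_pos S h (by omega) (by omega))

/-- interiors of different paths are disjoint. -/
lemma int_disj {u v a b : Fin 4} (h : u ≠ v) (h' : a ≠ b) {z : W}
    (h1 : z ∈ walkInterior (pth S h)) (h2 : z ∈ walkInterior (pth S h'))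
    (hne : ¬ ((u = a ∧ v = b) ∨ (u = b ∧ v = a))) : False := by
  have := S.interior_disjoint u v (idx0 h) a b (idx0 h') ⟨z, h1, h2⟩
  tauto

lemma supp_decomp {u v : Fin 4} (h : u ≠ v) {z : W} (hz : z ∈ (pth S h).support) :
    z = S.f u ∨ z = S.f v ∨ z ∈ walkInterior (pth S h) := by
  by_cases h1 : z = S.f u
  · exact Or.inl h1
  by_cases h2 : z = S.f v
  · exact Or.inr (Or.inl h2)
  exact Or.inr (Or.inr ⟨hz, h1, h2⟩)

lemma supp_shared {u v a b : Fin 4} (h : u ≠ v) (h' : a ≠ b) {z : W}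
    (h1 : z ∈ (pth S h).support) (h2 : z ∈ (pth S h').support)
    (hne : ¬ ((u = a ∧ v = b) ∨ (u = b ∧ v = a))) :
    (z = S.f u ∨ z = S.f v) ∧ (z = S.f a ∨ z = S.f b) := by
  rcases supp_decomp S h h1 with hz1 | hz1 | hz1
  · rcases supp_decomp S h' h2 with hz2 | hz2 | hz2
    · exact ⟨Or.inl hz1, Or.inl hz2⟩
    · exact ⟨Or.inl hz1, Or.inr hz2⟩
    · exact absurd (hz1 ▸ hz2) (S.interior_avoid a b (idx0 h') u)
  · rcases supp_decomp S h' h2 with hz2 | hz2 | hz2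
    · exact ⟨Or.inr hz1, Or.inl hz2⟩
    · exact ⟨Or.inr hz1, Or.inr hz2⟩
    · exact absurd (hz1 ▸ hz2) (S.interior_avoid a b (idx0 h') v)
  · rcases supp_decomp S h' h2 with hz2 | hz2 | hz2
    · exact absurd (hz2 ▸ hz1) (S.interior_avoid u v (idx0 h) a)
    · exact absurd (hz2 ▸ hz1) (S.interior_avoid u v (idx0 h) b)
    · exact absurd (int_disj S h h' hz1 hz2) (by tauto)

/-- every edge of `H` is a consecutive pair on some subdivision path. -/
lemma edge_loc {x y : W} (hxy : H.Adj x y) :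
    ∃ (u v : Fin 4) (h : u ≠ v) (k : ℕ), k < (pth S h).length ∧
      x = (pth S h).getVert k ∧ y = (pth S h).getVert (k + 1) := by
  obtain ⟨u, v, i, hi⟩ := S.edge_cover s(x, y) hxy
  have huv : u ≠ v := ne_of_idx i
  rw [idx_eq huv i] at hi
  have hi' : s(x, y) ∈ (pth S huv).edges := hi
  obtain ⟨j, hj, hje⟩ := WalkUtil.edge_getVert _ hi' 
  rw [Sym2.eq_iff] at hje
  rcases hje with ⟨hx, hy⟩ | ⟨hy, hx⟩
  · exact ⟨u, v, huv, j, hj, hx, hy⟩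
  · -- use the reversed path
    refine ⟨v, u, huv.symm, (pth S huv).length - (j + 1), ?_, ?_, ?_⟩
    · rw [pth_rev S huv, SimpleGraph.Walk.length_reverse]
      omega
    · rw [pth_rev S huv, SimpleGraph.Walk.getVert_reverse]
      have h9 : (pth S huv).length - ((pth S huv).length - (j + 1)) = j + 1 := by omega
      rw [h9]; exact hy
    · rw [pth_rev S huv, SimpleGraph.Walk.getVert_reverse]
      have h9 : (pth S huv).length - ((pth S huv).length - (j + 1) + 1) = j := by omega
      rw [h9]; exact hx

lemma branch_nonadj (a b : Fin 4) : ¬ H.Adj (S.f a) (S.f b) := by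
  intro hadj
  obtain ⟨u, v, h, k, hk, hx, hy⟩ := edge_loc S hadj
  have h1 := branch_pos S h (le_of_lt hk) hx.symm
  have h2 := branch_pos S h (by omega) hy.symm
  have := pth_len S h
  omega

/-- neighbors of an interior vertex lie on the same path, at adjacent positions. -/
lemma int_nbr {u v : Fin 4} (h : u ≠ v) {k : ℕ} (h1 : 0 < k) (h2 : k < (pth S h).length)
    {y : W} (hadj : H.Adj ((pth S h).getVert k) y) :
    y = (pth S h).getVert (k - 1) ∨ y = (pth S h).getVert (k + 1) := by
  obtain ⟨a, b, h', j, hj, hx, hy⟩ := edge_loc S hadj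
  set x := (pth S h).getVert k with hxdef
  have hxint : x ∈ walkInterior (pth S h) := int_of_pos S h h1 h2
  have hxsupp' : x ∈ (pth S h').support :=
    SimpleGraph.Walk.mem_support_iff_exists_getVert.2 ⟨j, hx.symm, le_of_lt hj⟩
  by_cases hpair : (a = u ∧ b = v) ∨ (a = v ∧ b = u)
  · rcases hpair with ⟨rfl, rfl⟩ | ⟨rfl, rfl⟩
    · -- same path, same direction
      have : j = k := WalkUtil.getVert_inj (pth_isPath S h') j k (le_of_lt hj) (le_of_lt h2)
        (by rw [← hx])
      subst this
      exact Or.inr hy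
    · -- reversed path
      have hrev : pth S h' = (pth S h'.symm).reverse := pth_rev S h'.symm
      rw [hrev, SimpleGraph.Walk.getVert_reverse] at hx hy
      rw [hrev, SimpleGraph.Walk.length_reverse] at hj
      have hjk : (pth S h'.symm).length - j = k := by
        refine WalkUtil.getVert_inj (pth_isPath S h'.symm) _ k (by omega) ?_ (by rw [← hx])
        · exact le_of_lt h2
      left
      rw [hy]
      congr 1
      omega
  · exfalso
    have := (supp_shared S h' h hxsupp' hxint.1 (by tauto)).2
    rcases this with h'' | h''
    · exact hxint.2.1 h''
    · exact hxint.2.2 h''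

/-- a neighbor of a branch vertex is the second vertex of a path at it. -/
lemma branch_nbr {e : Fin 4} {y : W} (hadj : H.Adj (S.f e) y) :
    ∃ (b : Fin 4) (h : e ≠ b), y = (pth S h).getVert 1 := by
  obtain ⟨u, v, h, k, hk, hx, hy⟩ := edge_loc S hadj
  have h1 := branch_pos S h (le_of_lt hk) hx.symm
  have hk0 : k = 0 := by omega
  subst hk0
  have he : e = u := f_inj S (by rw [hx, SimpleGraph.Walk.getVert_zero])
  subst he
  exact ⟨v, h, hy⟩

lemma frames_meet (F : W → Box) (hrep : IsFrameRepresentation H F)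
    {x y : W} (hadj : H.Adj x y) :
    ∃ pt, pt ∈ (F x).frame ∧ pt ∈ (F y).frame := by
  obtain ⟨pt, h1, h2⟩ := (hrep.adj_iff x y hadj.ne).1 hadj
  exact ⟨pt, h1, h2⟩

lemma frames_disj (F : W → Box) (hrep : IsFrameRepresentation H F)
    {x y : W} (hne : x ≠ y) (hadj : ¬ H.Adj x y) :
    ∀ q, q ∈ (F x).frame → q ∈ (F y).frame → False := by
  intro q h1 h2
  exact hadj ((hrep.adj_iff x y hne).2 ⟨q, h1, h2⟩)

/-- The goodness predicate: distinct from and non-adjacent to `v`. -/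
def Gd (H : SimpleGraph W) (v z : W) : Prop := z ≠ v ∧ ¬ H.Adj v z

lemma prop_walk (F : W → Box) (hrep : IsFrameRepresentation H F)
    {v x z : W} (q : H.Walk x z)
    (hgood : ∀ w ∈ q.support, Gd H v w)
    (hx : FrameProof.SIn (F x) (F v)) : FrameProof.SIn (F z) (F v) := by
  induction q with
  | nil => exact hx
  | @cons a b c hadj q ih =>
    refine ih (fun w hw => hgood w (by rw [SimpleGraph.Walk.support_cons]; simp [hw])) ?_
    obtain ⟨pt, hpt1, hpt2⟩ := frames_meet F hrep hadj
    have hb : Gd H v b := hgood b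
      (by rw [SimpleGraph.Walk.support_cons]; simp [SimpleGraph.Walk.start_mem_support])
    exact FrameProof.sin_trans_meet hx hpt2 hpt1.1
      (fun r hr1 hr2 => frames_disj F hrep hb.1 (fun h => hb.2 h.symm) r hr1 hr2)

/-! ## location taxonomy -/

lemma loc (z : W) : (∃ e, z = S.f e) ∨
    ∃ (u v : Fin 4) (h : u ≠ v) (k : ℕ), 0 < k ∧ k < (pth S h).length ∧
      z = (pth S h).getVert k := by
  rcases S.vertex_cover z with ⟨e, he⟩ | ⟨u, v, i, hi⟩
  · exact Or.inl ⟨e, he.symm⟩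
  · have huv : u ≠ v := ne_of_idx i
    rw [idx_eq huv i] at hi
    obtain ⟨k, h1, h2, h3⟩ := pos_of_int S huv hi
    exact Or.inr ⟨u, v, huv, k, h1, h2, h3.symm⟩

lemma length_pth_symm {a b : Fin 4} (h : a ≠ b) :
    (pth S h.symm).length = (pth S h).length := by
  rw [pth_rev S h]
  exact SimpleGraph.Walk.length_reverse _

lemma convpos {a b : Fin 4} (h : a ≠ b) {k : ℕ} (hk : k ≤ (pth S h).length) :
    (pth S h).getVert k = (pth S h.symm).getVert ((pth S h).length - k) := by
  rw [pth_rev S h, SimpleGraph.Walk.getVert_reverse]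
  congr 1
  omega

lemma adj_pos {a b : Fin 4} (h : a ≠ b) {k : ℕ} (hk : k < (pth S h).length) :
    H.Adj ((pth S h).getVert k) ((pth S h).getVert (k + 1)) :=
  SimpleGraph.Walk.adj_getVert_succ _ hk

/-- at most one branch vertex is adjacent to any vertex. -/
lemma adjBranch_unique {v : W} {e e' : Fin 4} (h1 : H.Adj v (S.f e)) (h2 : H.Adj v (S.f e')) :
    e = e' := by
  by_contra hne
  obtain ⟨c, hc, hv1⟩ := branch_nbr S h1.symm
  obtain ⟨c', hc', hv2⟩ := branch_nbr S h2.symm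
  have l1 := pth_len S hc
  have l2 := pth_len S hc'
  have hint1 : v ∈ walkInterior (pth S hc) := hv1 ▸ int_of_pos S hc (by omega) (by omega)
  have hint2 : v ∈ walkInterior (pth S hc') := hv2 ▸ int_of_pos S hc' (by omega) (by omega)
  have hdis := S.interior_disjoint e c (idx0 hc) e' c' (idx0 hc') ⟨v, hint1, hint2⟩
  have hp : (e = e' ∧ c = c') ∨ (e = c' ∧ c = e') := by tauto
  rcases hp with ⟨he, _⟩ | ⟨he, hcc⟩
  · exact hne he
  · subst he; subst hcc
    have hrev : pth S hc' = (pth S hc).reverse := pth_rev S hc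
    rw [hrev, SimpleGraph.Walk.getVert_reverse] at hv2
    have hlr : (pth S hc).reverse.length = (pth S hc).length :=
      SimpleGraph.Walk.length_reverse _
    have h9 : (1 : ℕ) = (pth S hc).length - 1 := by
      refine WalkUtil.getVert_inj (pth_isPath S hc) 1 ((pth S hc).length - 1)
        (by omega) (by omega) ?_
      rw [← hv1]
      exact hv2
    omega

/-- among three distinct branch indices, some branch vertex is good. -/
lemma branch_good_count {v : W} {e1 e2 e3 : Fin 4}
    (h12 : e1 ≠ e2) (h13 : e1 ≠ e3) (h23 : e2 ≠ e3) :
    ∃ σ, (σ = e1 ∨ σ = e2 ∨ σ = e3) ∧ Gd H v (S.f σ) := by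
  by_cases a1 : Gd H v (S.f e1)
  · exact ⟨e1, Or.inl rfl, a1⟩
  by_cases a2 : Gd H v (S.f e2)
  · exact ⟨e2, Or.inr (Or.inl rfl), a2⟩
  by_cases a3 : Gd H v (S.f e3)
  · exact ⟨e3, Or.inr (Or.inr rfl), a3⟩
  exfalso
  simp only [Gd, not_and, not_not] at a1 a2 a3
  by_cases q1 : S.f e1 = v
  · by_cases q2 : S.f e2 = v
    · exact h12 (f_inj S (q1.trans q2.symm))
    · by_cases q3 : S.f e3 = v
      · exact h13 (f_inj S (q1.trans q3.symm))
      · exact h23 (adjBranch_unique S (a2 (by simpa using q2)) (a3 (by simpa using q3)))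
  · by_cases q2 : S.f e2 = v
    · by_cases q3 : S.f e3 = v
      · exact h23 (f_inj S (q2.trans q3.symm))
      · exact h13 (adjBranch_unique S (a1 (by simpa using q1)) (a3 (by simpa using q3)))
    · exact h12 (adjBranch_unique S (a1 (by simpa using q1)) (a2 (by simpa using q2)))

/-! ## goodness of path positions: v a branch vertex -/

lemma GLB1 {v : W} {γ0 a b : Fin 4} (hv : v = S.f γ0) (h : a ≠ b)
    (ha : γ0 ≠ a) (hb : γ0 ≠ b) {j : ℕ} (hj : j ≤ (pth S h).length) :
    Gd H v ((pth S h).getVert j) := by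
  by_cases hj0 : j = 0
  · subst hj0
    rw [SimpleGraph.Walk.getVert_zero]
    exact ⟨fun hq => ha (f_inj S (hq.trans hv)).symm, by rw [hv]; exact branch_nonadj S γ0 a⟩
  by_cases hjl : j = (pth S h).length
  · subst hjl
    rw [SimpleGraph.Walk.getVert_length]
    exact ⟨fun hq => hb (f_inj S (hq.trans hv)).symm, by rw [hv]; exact branch_nonadj S γ0 b⟩
  constructor
  · intro hq
    rcases branch_pos S h hj (hq.trans hv) with h' | h' <;> omega
  · intro hA
    obtain ⟨c, hc, hx⟩ := branch_nbr S (hv ▸ hA)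
    have lc := pth_len S hc
    have hint1 : (pth S h).getVert j ∈ walkInterior (pth S h) :=
      int_of_pos S h (by omega) (by omega)
    have hint2 : (pth S h).getVert j ∈ walkInterior (pth S hc) :=
      hx ▸ int_of_pos S hc (by omega) (by omega)
    exact int_disj S h hc hint1 hint2 (by tauto)

lemma GLB2 {v : W} {γ0 b : Fin 4} (hv : v = S.f γ0) (h : γ0 ≠ b)
    {j : ℕ} (hj2 : 2 ≤ j) (hj : j ≤ (pth S h).length) :
    Gd H v ((pth S h).getVert j) := by
  by_cases hjl : j = (pth S h).length
  · subst hjl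
    rw [SimpleGraph.Walk.getVert_length]
    exact ⟨fun hq => h (f_inj S (hq.trans hv)).symm, by rw [hv]; exact branch_nonadj S γ0 b⟩
  have hl := pth_len S h
  constructor
  · intro hq
    rcases branch_pos S h hj (hq.trans hv) with h' | h' <;> omega
  · intro hA
    obtain ⟨c, hc, hx⟩ := branch_nbr S (hv ▸ hA)
    have lc := pth_len S hc
    have hint1 : (pth S h).getVert j ∈ walkInterior (pth S h) :=
      int_of_pos S h (by omega) (by omega)
    have hint2 : (pth S h).getVert j ∈ walkInterior (pth S hc) :=
      hx ▸ int_of_pos S hc (by omega) (by omega)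
    have hp := int_disj S h hc hint1 hint2
    have hcb : c = b := by tauto
    subst hcb
    -- same path: positions j and 1 coincide
    have : j = 1 := WalkUtil.getVert_inj (pth_isPath S h) j 1 hj (by omega) (by rw [hx])
    omega

/-! ## goodness of path positions: v an interior vertex of `pth γ δ` -/

section LI

variable {v : W} {γ δ : Fin 4} (hγδ : γ ≠ δ) {m : ℕ}

lemma LI_branch_ne (hm0 : 0 < m) (hml : m < (pth S hγδ).length)
    (hv : v = (pth S hγδ).getVert m) (e : Fin 4) : S.f e ≠ v := by
  intro hq
  rcases branch_pos S hγδ (le_of_lt hml) (hv ▸ hq.symm) with h' | h' <;> omega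

lemma GLI_adj_branch (hm0 : 0 < m) (hml : m < (pth S hγδ).length)
    (hv : v = (pth S hγδ).getVert m) {e : Fin 4} (hA : H.Adj v (S.f e)) :
    (e = γ ∧ m = 1) ∨ (e = δ ∧ m + 1 = (pth S hγδ).length) := by
  obtain ⟨c, hc, hx⟩ := branch_nbr S hA.symm
  have lc := pth_len S hc
  have hint1 : v ∈ walkInterior (pth S hγδ) := hv ▸ int_of_pos S hγδ hm0 hml
  have hint2 : v ∈ walkInterior (pth S hc) := hx ▸ int_of_pos S hc (by omega) (by omega)
  have hdis := S.interior_disjoint γ δ (idx0 hγδ) e c (idx0 hc) ⟨v, hint1, hint2⟩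
  have hp : (γ = e ∧ δ = c) ∨ (γ = c ∧ δ = e) := by tauto
  rcases hp with ⟨he, hcc⟩ | ⟨he, hcc⟩
  · subst he; subst hcc
    left
    refine ⟨rfl, ?_⟩
    have hceq : pth S hc = pth S hγδ := rfl
    rw [hceq] at hx
    exact WalkUtil.getVert_inj (pth_isPath S hγδ) m 1 (le_of_lt hml) (by omega)
      (by rw [← hv, ← hx])
  · subst he; subst hcc
    right
    refine ⟨rfl, ?_⟩
    have hceq : pth S hc = (pth S hγδ).reverse := pth_rev S hγδ
    rw [hceq, SimpleGraph.Walk.getVert_reverse] at hx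
    have hml2 : m = (pth S hγδ).length - 1 := by
      refine WalkUtil.getVert_inj (pth_isPath S hγδ) m ((pth S hγδ).length - 1)
        (le_of_lt hml) (by omega) ?_
      rw [← hv]
      exact hx
    omega

lemma GLI_int (hm0 : 0 < m) (hml : m < (pth S hγδ).length)
    (hv : v = (pth S hγδ).getVert m) {a b : Fin 4} (h : a ≠ b)
    (hpair : ¬ ((a = γ ∧ b = δ) ∨ (a = δ ∧ b = γ)))
    {j : ℕ} (hj0 : 0 < j) (hjl : j < (pth S h).length) :
    Gd H v ((pth S h).getVert j) := by
  have hint1 : (pth S h).getVert j ∈ walkInterior (pth S h) := int_of_pos S h hj0 hjl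
  have hintv : v ∈ walkInterior (pth S hγδ) := hv ▸ int_of_pos S hγδ hm0 hml
  constructor
  · intro hq
    exact int_disj S h hγδ hint1 (hq ▸ hintv) (by tauto)
  · intro hA
    rcases int_nbr S h hj0 hjl hA.symm with hq | hq
    · by_cases hj1 : j = 1
      · subst hj1
        simp only [Nat.sub_self] at hq
        rw [SimpleGraph.Walk.getVert_zero] at hq
        exact S.interior_avoid γ δ (idx0 hγδ) a (hq ▸ hintv)
      · have : v ∈ walkInterior (pth S h) :=
          hq ▸ int_of_pos S h (by omega) (by omega)
        exact int_disj S hγδ h hintv this (by tauto)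
    · by_cases hjl2 : j + 1 = (pth S h).length
      · rw [hjl2, SimpleGraph.Walk.getVert_length] at hq
        exact S.interior_avoid γ δ (idx0 hγδ) b (hq ▸ hintv)
      · have : v ∈ walkInterior (pth S h) :=
          hq ▸ int_of_pos S h (by omega) (by omega)
        exact int_disj S hγδ h hintv this (by tauto)

lemma GLI_low (hm0 : 0 < m) (hml : m < (pth S hγδ).length)
    (hv : v = (pth S hγδ).getVert m) {j : ℕ} (hj : j + 2 ≤ m) :
    Gd H v ((pth S hγδ).getVert j) := by
  by_cases hj0 : j = 0
  · subst hj0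
    rw [SimpleGraph.Walk.getVert_zero]
    refine ⟨(LI_branch_ne S hγδ hm0 hml hv γ), ?_⟩
    intro hA
    rcases GLI_adj_branch S hγδ hm0 hml hv hA with ⟨_, hm⟩ | ⟨he, _⟩
    · omega
    · exact hγδ he
  constructor
  · intro hq
    rw [hv] at hq
    have := WalkUtil.getVert_inj (pth_isPath S hγδ) j m (by omega) (le_of_lt hml) hq
    omega
  · intro hA
    rcases int_nbr S hγδ (by omega) (by omega) hA.symm with hq | hq
    · rw [hv] at hq
      have := WalkUtil.getVert_inj (pth_isPath S hγδ) m (j - 1) (le_of_lt hml)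
        (by omega) hq
      omega
    · rw [hv] at hq
      have := WalkUtil.getVert_inj (pth_isPath S hγδ) m (j + 1) (le_of_lt hml)
        (by omega) hq
      omega

lemma GLI_high (hm0 : 0 < m) (hml : m < (pth S hγδ).length)
    (hv : v = (pth S hγδ).getVert m) {j : ℕ} (hj : m + 2 ≤ j)
    (hjl : j ≤ (pth S hγδ).length) :
    Gd H v ((pth S hγδ).getVert j) := by
  by_cases hjlen : j = (pth S hγδ).length
  · subst hjlen
    rw [SimpleGraph.Walk.getVert_length]
    refine ⟨(LI_branch_ne S hγδ hm0 hml hv δ), ?_⟩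
    intro hA
    rcases GLI_adj_branch S hγδ hm0 hml hv hA with ⟨he, _⟩ | ⟨_, hm⟩
    · exact hγδ he.symm
    · omega
  constructor
  · intro hq
    rw [hv] at hq
    have := WalkUtil.getVert_inj (pth_isPath S hγδ) j m (by omega) (le_of_lt hml) hq
    omega
  · intro hA
    rcases int_nbr S hγδ (by omega) (by omega) hA.symm with hq | hq
    · rw [hv] at hq
      have := WalkUtil.getVert_inj (pth_isPath S hγδ) m (j - 1) (le_of_lt hml)
        (by omega) hq
      omega
    · rw [hv] at hq
      have := WalkUtil.getVert_inj (pth_isPath S hγδ) m (j + 1) (le_of_lt hml)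
        (by omega) hq
      omega

end LI


lemma mem_support_append {x y z w : W} {p : H.Walk x y} {q : H.Walk y z}
    (hw : w ∈ (p.append q).support) : w ∈ p.support ∨ w ∈ q.support := by
  rw [SimpleGraph.Walk.support_append] at hw
  rcases List.mem_append.1 hw with h | h
  · exact Or.inl h
  · exact Or.inr (List.mem_of_mem_tail h)

lemma fin4_third : ∀ e e' : Fin 4, ∃ ε : Fin 4, ε ≠ e ∧ ε ≠ e' := by decide

lemma compl_triple : ∀ θ : Fin 4, ∃ t1 t2 t3 : Fin 4,
    t1 ≠ t2 ∧ t2 ≠ t3 ∧ t3 ≠ t1 ∧ t1 ≠ θ ∧ t2 ≠ θ ∧ t3 ≠ θ := by decide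

/-! ## reaching any good vertex from a good branch vertex by a good walk -/

lemma reach {v : W} (z : W) (hz : Gd H v z) :
    ∃ e : Fin 4, Gd H v (S.f e) ∧
      ∃ r : H.Walk (S.f e) z, ∀ w ∈ r.support, Gd H v w := by
  rcases loc S z with ⟨e, rfl⟩ | ⟨a, b, h, k, hk0, hklen, rfl⟩
  · refine ⟨e, hz, SimpleGraph.Walk.nil, ?_⟩
    intro w hw
    rw [SimpleGraph.Walk.support_nil] at hw
    simp at hw
    rw [hw]
    exact hz
  rcases loc S v with ⟨γ0, hv⟩ | ⟨γ, δ, hγδ, m, hm0, hmlen, hv⟩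
  · -- v is a branch vertex
    by_cases hga : γ0 = a
    · subst hga
      -- z at position k on pth γ0 b; k ≥ 2 since z not adjacent to v
      have hk2 : 2 ≤ k := by
        rcases Nat.lt_or_ge k 2 with h' | h'
        · exfalso
          have hk1 : k = 1 := by omega
          subst hk1
          apply hz.2
          have := adj_pos S h (k := 0) (by omega)
          rw [SimpleGraph.Walk.getVert_zero] at this
          rw [hv]
          exact this
        · exact h'
      obtain ⟨r0, hr0⟩ := WalkUtil.drop_walk (pth S h) k (le_of_lt hklen)
      refine ⟨b, ?_, r0.reverse, ?_⟩
      · have := GLB2 S hv h (j := (pth S h).length) (by have := pth_len S h; omega) le_rfl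
        rw [SimpleGraph.Walk.getVert_length] at this
        exact this
      · intro w hw
        rw [SimpleGraph.Walk.support_reverse] at hw
        obtain ⟨i, hi1, hi2, hi3⟩ := hr0 w (List.mem_reverse.1 hw)
        exact hi3 ▸ GLB2 S hv h (by omega) hi2
    by_cases hgb : γ0 = b
    · subst hgb
      -- re-express z on the reversed path
      have hzc : (pth S h).getVert k = (pth S h.symm).getVert ((pth S h).length - k) :=
        convpos S h (le_of_lt hklen)
      have hlen' : (pth S h.symm).length = (pth S h).length := length_pth_symm S h
      have hk2 : 2 ≤ (pth S h).length - k := by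
        rcases Nat.lt_or_ge ((pth S h).length - k) 2 with h' | h'
        · exfalso
          have hk1 : k = (pth S h).length - 1 := by omega
          apply hz.2
          have := adj_pos S h (k := (pth S h).length - 1) (by omega)
          have hgl : (pth S h).getVert ((pth S h).length - 1 + 1) = S.f γ0 := by
            have h9 : (pth S h).length - 1 + 1 = (pth S h).length := by
              have := pth_len S h; omega
            rw [h9, SimpleGraph.Walk.getVert_length]
          rw [hgl] at this
          rw [hv, hk1]
          exact this.symm
        · exact h'
      obtain ⟨r0, hr0⟩ := WalkUtil.drop_walk (pth S h.symm) ((pth S h).length - k)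
        (by omega)
      refine ⟨a, ?_, (r0.reverse).copy rfl hzc.symm, ?_⟩
      · have := GLB2 S hv h.symm (j := (pth S h.symm).length)
          (by have := pth_len S h; omega) le_rfl
        rw [SimpleGraph.Walk.getVert_length] at this
        exact this
      · intro w hw
        rw [SimpleGraph.Walk.support_copy, SimpleGraph.Walk.support_reverse] at hw
        obtain ⟨i, hi1, hi2, hi3⟩ := hr0 w (List.mem_reverse.1 hw)
        exact hi3 ▸ GLB2 S hv h.symm (by omega) hi2
    · -- γ0 avoids the path entirely
      obtain ⟨r0, hr0⟩ := WalkUtil.take_walk (pth S h) k (le_of_lt hklen)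
      refine ⟨a, ?_, r0, ?_⟩
      · have := GLB1 S hv h hga hgb (j := 0) (by omega)
        rw [SimpleGraph.Walk.getVert_zero] at this
        exact this
      · intro w hw
        obtain ⟨i, hi1, hi2⟩ := hr0 w hw
        exact hi2 ▸ GLB1 S hv h hga hgb (by omega)
  · -- v is interior of pth γ δ at position m
    by_cases hpair : (a = γ ∧ b = δ) ∨ (a = δ ∧ b = γ)
    · -- same path as v; normalize to pth γ δ
      have hex : ∃ k', 0 < k' ∧ k' < (pth S hγδ).length ∧
          (pth S h).getVert k = (pth S hγδ).getVert k' := by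
        rcases hpair with ⟨rfl, rfl⟩ | ⟨rfl, rfl⟩
        · exact ⟨k, hk0, hklen, by rfl⟩
        · have hceq : pth S h = (pth S hγδ).reverse := pth_rev S hγδ
          refine ⟨(pth S hγδ).length - k, ?_, ?_, ?_⟩
          · have hl : (pth S h).length = (pth S hγδ).length := by
              rw [hceq]; exact SimpleGraph.Walk.length_reverse _
            omega
          · have hl : (pth S h).length = (pth S hγδ).length := by
              rw [hceq]; exact SimpleGraph.Walk.length_reverse _
            omega
          · rw [hceq, SimpleGraph.Walk.getVert_reverse]
      obtain ⟨k', hk'0, hk'l, hkeq⟩ := hex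
      rw [hkeq] at hz ⊢
      -- k' avoids {m-1, m, m+1}
      have hknem : k' ≠ m := by
        intro h'
        exact hz.1 (by rw [h', ← hv])
      have hknem1 : k' ≠ m - 1 := by
        intro h'
        apply hz.2
        have := adj_pos S hγδ (k := m - 1) (by omega)
        have h9 : m - 1 + 1 = m := by omega
        rw [h9, ← hv] at this
        rw [h']
        exact this.symm
      have hknem2 : k' ≠ m + 1 := by
        intro h'
        rcases Nat.lt_or_ge (m + 1) (pth S hγδ).length with hlt | hge
        · apply hz.2
          have := adj_pos S hγδ (k := m) (by omega)
          rw [← hv] at this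
          rw [h']
          exact this
        · omega
      rcases Nat.lt_or_ge k' m with hlow | hhigh
      · -- low side: reach from f γ
        obtain ⟨r0, hr0⟩ := WalkUtil.take_walk (pth S hγδ) k' (by omega)
        refine ⟨γ, ?_, r0, ?_⟩
        · have := GLI_low S hγδ hm0 hmlen hv (j := 0) (by omega)
          rw [SimpleGraph.Walk.getVert_zero] at this
          exact this
        · intro w hw
          obtain ⟨i, hi1, hi2⟩ := hr0 w hw
          exact hi2 ▸ GLI_low S hγδ hm0 hmlen hv (by omega)
      · -- high side: reach from f δ
        have hk2 : m + 2 ≤ k' := by omega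
        obtain ⟨r0, hr0⟩ := WalkUtil.drop_walk (pth S hγδ) k' (by omega)
        refine ⟨δ, ?_, r0.reverse, ?_⟩
        · have := GLI_high S hγδ hm0 hmlen hv (j := (pth S hγδ).length)
            (by have := pth_len S hγδ; omega) le_rfl
          rw [SimpleGraph.Walk.getVert_length] at this
          exact this
        · intro w hw
          rw [SimpleGraph.Walk.support_reverse] at hw
          obtain ⟨i, hi1, hi2, hi3⟩ := hr0 w (List.mem_reverse.1 hw)
          exact hi3 ▸ GLI_high S hγδ hm0 hmlen hv (by omega) hi2
    · -- different path from v's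
      by_cases hga : Gd H v (S.f a)
      · obtain ⟨r0, hr0⟩ := WalkUtil.take_walk (pth S h) k (le_of_lt hklen)
        refine ⟨a, hga, r0, ?_⟩
        intro w hw
        obtain ⟨i, hi1, hi2⟩ := hr0 w hw
        by_cases hi0 : i = 0
        · subst hi0
          rw [SimpleGraph.Walk.getVert_zero] at hi2
          exact hi2 ▸ hga
        · exact hi2 ▸ GLI_int S hγδ hm0 hmlen hv h hpair (by omega) (by omega)
      · -- then f b is good
        have hgb : Gd H v (S.f b) := by
          constructor
          · exact LI_branch_ne S hγδ hm0 hmlen hv b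
          · intro hA
            have hna : ¬ S.f a = v := LI_branch_ne S hγδ hm0 hmlen hv a
            have hAa : H.Adj v (S.f a) := by
              by_contra h'
              exact hga ⟨hna, h'⟩
            rcases GLI_adj_branch S hγδ hm0 hmlen hv hAa with ⟨ha1, _⟩ | ⟨ha1, ha2⟩ <;>
              rcases GLI_adj_branch S hγδ hm0 hmlen hv hA with ⟨hb1, _⟩ | ⟨hb1, hb2⟩
            · exact h (ha1.trans hb1.symm)
            · exact hpair (Or.inl ⟨ha1, hb1⟩)
            · exact hpair (Or.inr ⟨ha1, hb1⟩)
            · exact h (ha1.trans hb1.symm)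
        obtain ⟨r0, hr0⟩ := WalkUtil.drop_walk (pth S h) k (le_of_lt hklen)
        refine ⟨b, hgb, r0.reverse, ?_⟩
        intro w hw
        rw [SimpleGraph.Walk.support_reverse] at hw
        obtain ⟨i, hi1, hi2, hi3⟩ := hr0 w (List.mem_reverse.1 hw)
        by_cases hil : i = (pth S h).length
        · subst hil
          rw [SimpleGraph.Walk.getVert_length] at hi3
          exact hi3 ▸ hgb
        · exact hi3 ▸ GLI_int S hγδ hm0 hmlen hv h hpair (by omega) (by omega)

/-! ## connecting two good branch vertices by a good walk -/

lemma hub {v : W} {e e' : Fin 4} (he : Gd H v (S.f e)) (he' : Gd H v (S.f e')) :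
    ∃ r : H.Walk (S.f e) (S.f e'), ∀ w ∈ r.support, Gd H v w := by
  by_cases hee : e = e'
  · subst hee
    refine ⟨SimpleGraph.Walk.nil, ?_⟩
    intro w hw
    rw [SimpleGraph.Walk.support_nil] at hw
    simp at hw
    exact hw ▸ he
  rcases loc S v with ⟨γ0, hv⟩ | ⟨γ, δ, hγδ, m, hm0, hmlen, hv⟩
  · -- v branch: direct path works
    have hg0e : γ0 ≠ e := fun h' => he.1 (by rw [← h', ← hv])
    have hg0e' : γ0 ≠ e' := fun h' => he'.1 (by rw [← h', ← hv])
    refine ⟨pth S hee, ?_⟩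
    intro w hw
    obtain ⟨i, hi1, hi2⟩ := SimpleGraph.Walk.mem_support_iff_exists_getVert.1 hw
    exact hi1 ▸ GLB1 S hv hee hg0e hg0e' hi2
  · by_cases hpair : (e = γ ∧ e' = δ) ∨ (e = δ ∧ e' = γ)
    · -- route through a third branch vertex
      obtain ⟨ε, hε1, hε2⟩ := fin4_third e e'
      have hgε : Gd H v (S.f ε) := by
        refine ⟨LI_branch_ne S hγδ hm0 hmlen hv ε, ?_⟩
        intro hA
        rcases GLI_adj_branch S hγδ hm0 hmlen hv hA with ⟨h1, _⟩ | ⟨h1, _⟩ <;>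
          rcases hpair with ⟨h2, h3⟩ | ⟨h2, h3⟩
        · exact hε1 (h1.trans h2.symm)
        · exact hε2 (h1.trans h3.symm)
        · exact hε2 (h1.trans h3.symm)
        · exact hε1 (h1.trans h2.symm)
      have heε : e ≠ ε := fun h' => hε1 h'.symm
      have hεe' : ε ≠ e' := hε2
      have hp1 : ¬ ((e = γ ∧ ε = δ) ∨ (e = δ ∧ ε = γ)) := by
        rcases hpair with ⟨h2, h3⟩ | ⟨h2, h3⟩
        · rintro (⟨h4, h5⟩ | ⟨h4, h5⟩)
          · exact hε2 (h5.trans h3.symm)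
          · exact hγδ (h2.symm.trans h4)
        · rintro (⟨h4, h5⟩ | ⟨h4, h5⟩)
          · exact hγδ (h4.symm.trans h2)
          · exact hε2 (h5.trans h3.symm)
      have hp2 : ¬ ((ε = γ ∧ e' = δ) ∨ (ε = δ ∧ e' = γ)) := by
        rcases hpair with ⟨h2, h3⟩ | ⟨h2, h3⟩
        · rintro (⟨h4, h5⟩ | ⟨h4, h5⟩)
          · exact hε1 (h4.trans h2.symm)
          · exact hε2 (h4.trans h3.symm)
        · rintro (⟨h4, h5⟩ | ⟨h4, h5⟩)
          · exact hε2 (h4.trans h3.symm)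
          · exact hε1 (h4.trans h2.symm)
      refine ⟨(pth S heε).append (pth S hεe'), ?_⟩
      intro w hw
      rcases mem_support_append hw with hw' | hw'
      · obtain ⟨i, hi1, hi2⟩ := SimpleGraph.Walk.mem_support_iff_exists_getVert.1 hw'
        by_cases hi0 : i = 0
        · subst hi0; rw [SimpleGraph.Walk.getVert_zero] at hi1; exact hi1 ▸ he
        by_cases hil : i = (pth S heε).length
        · subst hil; rw [SimpleGraph.Walk.getVert_length] at hi1; exact hi1 ▸ hgε
        · exact hi1 ▸ GLI_int S hγδ hm0 hmlen hv heε hp1 (by omega) (by omega)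
      · obtain ⟨i, hi1, hi2⟩ := SimpleGraph.Walk.mem_support_iff_exists_getVert.1 hw'
        by_cases hi0 : i = 0
        · subst hi0; rw [SimpleGraph.Walk.getVert_zero] at hi1; exact hi1 ▸ hgε
        by_cases hil : i = (pth S hεe').length
        · subst hil; rw [SimpleGraph.Walk.getVert_length] at hi1; exact hi1 ▸ he'
        · exact hi1 ▸ GLI_int S hγδ hm0 hmlen hv hεe' hp2 (by omega) (by omega)
    · -- direct path works
      refine ⟨pth S hee, ?_⟩
      intro w hw
      obtain ⟨i, hi1, hi2⟩ := SimpleGraph.Walk.mem_support_iff_exists_getVert.1 hw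
      by_cases hi0 : i = 0
      · subst hi0; rw [SimpleGraph.Walk.getVert_zero] at hi1; exact hi1 ▸ he
      by_cases hil : i = (pth S hee).length
      · subst hil; rw [SimpleGraph.Walk.getVert_length] at hi1; exact hi1 ▸ he'
      · exact hi1 ▸ GLI_int S hγδ hm0 hmlen hv hee hpair (by omega) (by omega)

/-! ## globalization of a cycle-big vertex -/

lemma glob (F : W → Box) (hrep : IsFrameRepresentation H F) {v : W} {t1 t2 t3 : Fin 4}
    (h12 : t1 ≠ t2) (h23 : t2 ≠ t3) (h31 : t3 ≠ t1)
    (hbig : ∀ z, (z ∈ (pth S h12).support ∨ z ∈ (pth S h23).support ∨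
        z ∈ (pth S h31).support) → Gd H v z → FrameProof.SIn (F z) (F v)) :
    ∀ z, Gd H v z → FrameProof.SIn (F z) (F v) := by
  obtain ⟨σ, hσmem, hσgd⟩ := branch_good_count S h12 h31.symm h23
  have hσcyc : S.f σ ∈ (pth S h12).support ∨ S.f σ ∈ (pth S h23).support ∨
      S.f σ ∈ (pth S h31).support := by
    rcases hσmem with rfl | rfl | rfl
    · exact Or.inl (SimpleGraph.Walk.start_mem_support _)
    · exact Or.inl (SimpleGraph.Walk.end_mem_support _)
    · exact Or.inr (Or.inl (SimpleGraph.Walk.end_mem_support _))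
  have hσin : FrameProof.SIn (F (S.f σ)) (F v) := hbig _ hσcyc hσgd
  intro z hz
  obtain ⟨e, hge, r, hr⟩ := reach S z hz
  obtain ⟨r0, hr0⟩ := hub S hσgd hge
  refine prop_walk F hrep (r0.append r) ?_ hσin
  intro w hw
  rcases mem_support_append hw with h' | h'
  · exact hr0 w h'
  · exact hr w h'

/-! ## a triangle cycle avoiding the closed neighborhood of `v` -/

lemma avoid_cycle (v : W) : ∃ (t1 t2 t3 : Fin 4) (h12 : t1 ≠ t2) (h23 : t2 ≠ t3)
    (h31 : t3 ≠ t1), ∀ z, (z ∈ (pth S h12).support ∨ z ∈ (pth S h23).support ∨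
      z ∈ (pth S h31).support) → Gd H v z := by
  rcases loc S v with ⟨θ, hv⟩ | ⟨γ, δ, hγδ, m, hm0, hmlen, hv⟩
  · obtain ⟨t1, t2, t3, d12, d23, d31, n1, n2, n3⟩ := compl_triple θ
    refine ⟨t1, t2, t3, d12, d23, d31, ?_⟩
    have key : ∀ (a b : Fin 4) (h : a ≠ b), θ ≠ a → θ ≠ b →
        ∀ z ∈ (pth S h).support, Gd H v z := by
      intro a b h hθa hθb z hzs
      obtain ⟨i, hi1, hi2⟩ := SimpleGraph.Walk.mem_support_iff_exists_getVert.1 hzs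
      exact hi1 ▸ GLB1 S hv h hθa hθb hi2
    rintro z (hzs | hzs | hzs)
    · exact key t1 t2 d12 (Ne.symm n1) (Ne.symm n2) z hzs
    · exact key t2 t3 d23 (Ne.symm n2) (Ne.symm n3) z hzs
    · exact key t3 t1 d31 (Ne.symm n3) (Ne.symm n1) z hzs
  · have hexθ : ∃ θ, (θ = γ ∨ θ = δ) ∧ ∀ e : Fin 4, H.Adj v (S.f e) → e = θ := by
      by_cases hAδ : H.Adj v (S.f δ)
      · refine ⟨δ, Or.inr rfl, ?_⟩
        intro e hA
        exact adjBranch_unique S hA hAδ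
      · refine ⟨γ, Or.inl rfl, ?_⟩
        intro e hA
        rcases GLI_adj_branch S hγδ hm0 hmlen hv hA with ⟨h1, _⟩ | ⟨h1, _⟩
        · exact h1
        · exact absurd (h1 ▸ hA) hAδ
    obtain ⟨θ, hθγδ, hθ⟩ := hexθ
    obtain ⟨t1, t2, t3, d12, d23, d31, n1, n2, n3⟩ := compl_triple θ
    refine ⟨t1, t2, t3, d12, d23, d31, ?_⟩
    have key : ∀ (a b : Fin 4) (h : a ≠ b), a ≠ θ → b ≠ θ →
        ∀ z ∈ (pth S h).support, Gd H v z := by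
      intro a b h hθa hθb z hzs
      have hpair : ¬ ((a = γ ∧ b = δ) ∨ (a = δ ∧ b = γ)) := by
        rcases hθγδ with rfl | rfl
        · rintro (⟨h1, h2⟩ | ⟨h1, h2⟩)
          · exact hθa h1
          · exact hθb h2
        · rintro (⟨h1, h2⟩ | ⟨h1, h2⟩)
          · exact hθb h2
          · exact hθa h1
      obtain ⟨i, hi1, hi2⟩ := SimpleGraph.Walk.mem_support_iff_exists_getVert.1 hzs
      by_cases hi0 : i = 0
      · subst hi0
        rw [SimpleGraph.Walk.getVert_zero] at hi1
        refine hi1 ▸ ⟨LI_branch_ne S hγδ hm0 hmlen hv a, fun hA => hθa (hθ a hA)⟩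
      by_cases hil : i = (pth S h).length
      · subst hil
        rw [SimpleGraph.Walk.getVert_length] at hi1
        refine hi1 ▸ ⟨LI_branch_ne S hγδ hm0 hmlen hv b, fun hA => hθb (hθ b hA)⟩
      · exact hi1 ▸ GLI_int S hγδ hm0 hmlen hv h hpair (by omega) (by omega)
    rintro z (hzs | hzs | hzs)
    · exact key t1 t2 d12 n1 n2 z hzs
    · exact key t2 t3 d23 n2 n3 z hzs
    · exact key t3 t1 d31 n3 n1 z hzs


/-! ## the closed walk around a triangle of branch vertices -/

noncomputable def W0 {t1 t2 t3 : Fin 4} (h12 : t1 ≠ t2) (h23 : t2 ≠ t3) (h31 : t3 ≠ t1) :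
    H.Walk (S.f t1) (S.f t1) :=
  (pth S h12).append ((pth S h23).append (pth S h31))

noncomputable def nTot {t1 t2 t3 : Fin 4} (S : MultiSubdivision K4m H 2)
    (h12 : t1 ≠ t2) (h23 : t2 ≠ t3) (h31 : t3 ≠ t1) : ℕ :=
  (pth S h12).length + (pth S h23).length + (pth S h31).length

variable {t1 t2 t3 : Fin 4} (h12 : t1 ≠ t2) (h23 : t2 ≠ t3) (h31 : t3 ≠ t1)

lemma W0_len : (W0 S h12 h23 h31).length = nTot S h12 h23 h31 := by
  rw [W0, SimpleGraph.Walk.length_append, SimpleGraph.Walk.length_append, nTot]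
  omega

lemma nTot_ge : 9 ≤ nTot S h12 h23 h31 := by
  have := pth_len S h12; have := pth_len S h23; have := pth_len S h31
  rw [nTot]; omega

lemma seg1 {i : ℕ} (hi : i ≤ (pth S h12).length) :
    (W0 S h12 h23 h31).getVert i = (pth S h12).getVert i := by
  rw [W0, SimpleGraph.Walk.getVert_append]
  by_cases h : i < (pth S h12).length
  · rw [if_pos h]
  · have hieq : i = (pth S h12).length := by omega
    subst hieq
    rw [if_neg (by omega), Nat.sub_self, SimpleGraph.Walk.getVert_zero,
      SimpleGraph.Walk.getVert_length]

lemma seg2 {i : ℕ} (hi : i ≤ (pth S h23).length) :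
    (W0 S h12 h23 h31).getVert ((pth S h12).length + i) = (pth S h23).getVert i := by
  rw [W0, SimpleGraph.Walk.getVert_append, if_neg (by omega), Nat.add_sub_cancel_left,
    SimpleGraph.Walk.getVert_append]
  by_cases h : i < (pth S h23).length
  · rw [if_pos h]
  · have hieq : i = (pth S h23).length := by omega
    subst hieq
    rw [if_neg (by omega), Nat.sub_self, SimpleGraph.Walk.getVert_zero,
      SimpleGraph.Walk.getVert_length]

lemma seg3 {i : ℕ} (hi : i ≤ (pth S h31).length) :
    (W0 S h12 h23 h31).getVert ((pth S h12).length + (pth S h23).length + i) =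
      (pth S h31).getVert i := by
  rw [W0, SimpleGraph.Walk.getVert_append, if_neg (by omega)]
  have h9 : (pth S h12).length + (pth S h23).length + i - (pth S h12).length =
      (pth S h23).length + i := by omega
  rw [h9, SimpleGraph.Walk.getVert_append, if_neg (by omega), Nat.add_sub_cancel_left]

lemma gv_zero : (W0 S h12 h23 h31).getVert 0 = S.f t1 := SimpleGraph.Walk.getVert_zero _

lemma gv_n : (W0 S h12 h23 h31).getVert (nTot S h12 h23 h31) = S.f t1 := by
  have := SimpleGraph.Walk.getVert_length (W0 S h12 h23 h31)
  rwa [W0_len] at this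

/-- vertices of the cycle at positions `< nTot` lie in the union of the three supports. -/
lemma memcyc {i : ℕ} (hi : i ≤ nTot S h12 h23 h31) :
    (W0 S h12 h23 h31).getVert i ∈ (pth S h12).support ∨
    (W0 S h12 h23 h31).getVert i ∈ (pth S h23).support ∨
    (W0 S h12 h23 h31).getVert i ∈ (pth S h31).support := by
  rw [nTot] at hi
  rcases Nat.lt_or_ge i ((pth S h12).length + 1) with h | h
  · left
    rw [seg1 S h12 h23 h31 (by omega)]
    exact SimpleGraph.Walk.mem_support_iff_exists_getVert.2 ⟨i, rfl, by omega⟩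
  rcases Nat.lt_or_ge i ((pth S h12).length + (pth S h23).length + 1) with h' | h'
  · right; left
    have h9 : i = (pth S h12).length + (i - (pth S h12).length) := by omega
    rw [h9, seg2 S h12 h23 h31 (by omega)]
    exact SimpleGraph.Walk.mem_support_iff_exists_getVert.2 ⟨_, rfl, by omega⟩
  · right; right
    have h9 : i = (pth S h12).length + (pth S h23).length +
        (i - (pth S h12).length - (pth S h23).length) := by omega
    rw [h9, seg3 S h12 h23 h31 (by omega)]
    exact SimpleGraph.Walk.mem_support_iff_exists_getVert.2 ⟨_, rfl, by omega⟩

/-- conversely, any vertex in the union of supports appears at a position `< nTot`. -/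
lemma suppcyc {z : W} (hz : z ∈ (pth S h12).support ∨ z ∈ (pth S h23).support ∨
    z ∈ (pth S h31).support) :
    ∃ i, i < nTot S h12 h23 h31 ∧ (W0 S h12 h23 h31).getVert i = z := by
  have hn := nTot_ge S h12 h23 h31
  have l1 := pth_len S h12; have l2 := pth_len S h23; have l3 := pth_len S h31
  rcases hz with hz | hz | hz
  · obtain ⟨k, hk1, hk2⟩ := SimpleGraph.Walk.mem_support_iff_exists_getVert.1 hz
    exact ⟨k, by rw [nTot]; omega, by rw [seg1 S h12 h23 h31 hk2]; exact hk1⟩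
  · obtain ⟨k, hk1, hk2⟩ := SimpleGraph.Walk.mem_support_iff_exists_getVert.1 hz
    exact ⟨(pth S h12).length + k, by rw [nTot]; omega,
      by rw [seg2 S h12 h23 h31 hk2]; exact hk1⟩
  · obtain ⟨k, hk1, hk2⟩ := SimpleGraph.Walk.mem_support_iff_exists_getVert.1 hz
    by_cases hkl : k = (pth S h31).length
    · refine ⟨0, by omega, ?_⟩
      rw [gv_zero]
      rw [← hk1, hkl, SimpleGraph.Walk.getVert_length]
    · exact ⟨(pth S h12).length + (pth S h23).length + k, by rw [nTot]; omega,
        by rw [seg3 S h12 h23 h31 hk2]; exact hk1⟩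

/-- positions below `nTot` carry pairwise distinct vertices. -/
lemma cycInj {i j : ℕ} (hi : i < nTot S h12 h23 h31) (hj : j < nTot S h12 h23 h31)
    (hij : (W0 S h12 h23 h31).getVert i = (W0 S h12 h23 h31).getVert j) : i = j := by
  have l1 := pth_len S h12; have l2 := pth_len S h23; have l3 := pth_len S h31
  have h13 : t1 ≠ t3 := fun h => h31 h.symm
  rw [nTot] at hi hj
  -- cross-block impossibility claims
  have C12 : ∀ a b : ℕ, a < (pth S h12).length → b < (pth S h23).length →
      (pth S h12).getVert a = (pth S h23).getVert b → False := by
    intro a b ha hb hab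
    have hm1 : (pth S h12).getVert a ∈ (pth S h12).support :=
      SimpleGraph.Walk.mem_support_iff_exists_getVert.2 ⟨a, rfl, by omega⟩
    have hm2 : (pth S h12).getVert a ∈ (pth S h23).support := by
      rw [hab]; exact SimpleGraph.Walk.mem_support_iff_exists_getVert.2 ⟨b, rfl, by omega⟩
    have hsh := supp_shared S h12 h23 hm1 hm2 (by
      rintro (⟨hq1, hq2⟩ | ⟨hq1, hq2⟩)
      · exact h12 hq1
      · exact h13 hq1)
    rcases hsh.1 with hv1 | hv1
    · -- value is f t1 : impossible in supp of pth t2 t3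
      rcases hsh.2 with hv2 | hv2
      · exact h12 (f_inj S (hv1.symm.trans hv2))
      · exact h13 (f_inj S (hv1.symm.trans hv2))
    · -- value is f t2 : position in pth t1 t2 must be 0 or length
      rcases branch_pos S h12 (by omega : a ≤ (pth S h12).length) hv1 with h0 | h0
      · subst h0
        rw [SimpleGraph.Walk.getVert_zero] at hv1
        exact h12 (f_inj S hv1)
      · omega
  have C13 : ∀ a b : ℕ, a < (pth S h12).length → b < (pth S h31).length →
      (pth S h12).getVert a = (pth S h31).getVert b → False := by
    intro a b ha hb hab
    have hm1 : (pth S h12).getVert a ∈ (pth S h12).support :=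
      SimpleGraph.Walk.mem_support_iff_exists_getVert.2 ⟨a, rfl, by omega⟩
    have hm2 : (pth S h12).getVert a ∈ (pth S h31).support := by
      rw [hab]; exact SimpleGraph.Walk.mem_support_iff_exists_getVert.2 ⟨b, rfl, by omega⟩
    have hsh := supp_shared S h12 h31 hm1 hm2 (by
      rintro (⟨hq1, hq2⟩ | ⟨hq1, hq2⟩)
      · exact h13 hq1
      · exact h23 hq2)
    rcases hsh.1 with hv1 | hv1
    · -- value is f t1 : in pth t3 t1 only at position length, excluded
      rcases hsh.2 with hv2 | hv2
      · exact h13 (f_inj S (hv1.symm.trans hv2))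
      · rcases branch_pos S h31 (by omega : b ≤ (pth S h31).length) (hab ▸ hv1) with h0 | h0
        · subst h0
          rw [SimpleGraph.Walk.getVert_zero] at hab
          rw [hv1] at hab
          exact h13 (f_inj S hab)
        · omega
    · -- value is f t2
      rcases hsh.2 with hv2 | hv2
      · exact h23 (f_inj S (hv1.symm.trans hv2))
      · exact h12 (f_inj S (hv1.symm.trans hv2)).symm
  have C23 : ∀ a b : ℕ, a < (pth S h23).length → b < (pth S h31).length →
      (pth S h23).getVert a = (pth S h31).getVert b → False := by
    intro a b ha hb hab
    have hm1 : (pth S h23).getVert a ∈ (pth S h23).support :=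
      SimpleGraph.Walk.mem_support_iff_exists_getVert.2 ⟨a, rfl, by omega⟩
    have hm2 : (pth S h23).getVert a ∈ (pth S h31).support := by
      rw [hab]; exact SimpleGraph.Walk.mem_support_iff_exists_getVert.2 ⟨b, rfl, by omega⟩
    have hsh := supp_shared S h23 h31 hm1 hm2 (by
      rintro (⟨hq1, hq2⟩ | ⟨hq1, hq2⟩)
      · exact h23 hq1
      · exact h12 hq1.symm)
    rcases hsh.1 with hv1 | hv1
    · -- value is f t2
      rcases hsh.2 with hv2 | hv2
      · exact h23 (f_inj S (hv1.symm.trans hv2))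
      · exact h12 (f_inj S (hv1.symm.trans hv2)).symm
    · -- value is f t3 : position in pth t2 t3 is 0 or length
      rcases branch_pos S h23 (by omega : a ≤ (pth S h23).length) hv1 with h0 | h0
      · subst h0
        rw [SimpleGraph.Walk.getVert_zero] at hv1
        exact h23 (f_inj S hv1)
      · omega
  -- block decomposition
  have blk : ∀ r : ℕ, r < (pth S h12).length + (pth S h23).length + (pth S h31).length →
      (r < (pth S h12).length) ∨
      ((pth S h12).length ≤ r ∧ r < (pth S h12).length + (pth S h23).length) ∨
      ((pth S h12).length + (pth S h23).length ≤ r) := by intro r hr; omega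
  have gvi : ∀ r : ℕ, r < (pth S h12).length + (pth S h23).length + (pth S h31).length →
      ((W0 S h12 h23 h31).getVert r = (pth S h12).getVert r ∧ r < (pth S h12).length) ∨
      ((W0 S h12 h23 h31).getVert r = (pth S h23).getVert (r - (pth S h12).length) ∧
        (pth S h12).length ≤ r ∧ r - (pth S h12).length < (pth S h23).length) ∨
      ((W0 S h12 h23 h31).getVert r =
          (pth S h31).getVert (r - (pth S h12).length - (pth S h23).length) ∧
        (pth S h12).length + (pth S h23).length ≤ r ∧
        r - (pth S h12).length - (pth S h23).length < (pth S h31).length) := by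
    intro r hr
    rcases blk r hr with h | ⟨h1, h2⟩ | h1
    · exact Or.inl ⟨seg1 S h12 h23 h31 (by omega), h⟩
    · refine Or.inr (Or.inl ⟨?_, h1, by omega⟩)
      have h9 : r = (pth S h12).length + (r - (pth S h12).length) := by omega
      have hs := seg2 S h12 h23 h31 (i := r - (pth S h12).length) (by omega)
      rw [← h9] at hs
      exact hs
    · refine Or.inr (Or.inr ⟨?_, h1, by omega⟩)
      have h9 : r = (pth S h12).length + (pth S h23).length +
          (r - (pth S h12).length - (pth S h23).length) := by omega
      have hs := seg3 S h12 h23 h31 (i := r - (pth S h12).length - (pth S h23).length) (by omega)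
      rw [← h9] at hs
      exact hs
  rcases gvi i hi with ⟨e1, p1⟩ | ⟨e1, p1, p1'⟩ | ⟨e1, p1, p1'⟩ <;>
    rcases gvi j hj with ⟨e2, p2⟩ | ⟨e2, p2, p2'⟩ | ⟨e2, p2, p2'⟩
  · rw [e1, e2] at hij
    have := WalkUtil.getVert_inj (pth_isPath S h12) i j (by omega) (by omega) hij
    omega
  · exact absurd (e1 ▸ e2 ▸ hij) (fun h => C12 _ _ p1 p2' h)
  · exact absurd (e1 ▸ e2 ▸ hij) (fun h => C13 _ _ p1 p2' h)
  · exact absurd (e1 ▸ e2 ▸ hij) (fun h => C12 _ _ p2 p1' h.symm)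
  · rw [e1, e2] at hij
    have := WalkUtil.getVert_inj (pth_isPath S h23) _ _ (by omega) (by omega) hij
    omega
  · exact absurd (e1 ▸ e2 ▸ hij) (fun h => C23 _ _ p1' p2' h)
  · exact absurd (e1 ▸ e2 ▸ hij) (fun h => C13 _ _ p2 p1' h.symm)
  · exact absurd (e1 ▸ e2 ▸ hij) (fun h => C23 _ _ p2' p1' h.symm)
  · rw [e1, e2] at hij
    have := WalkUtil.getVert_inj (pth_isPath S h31) _ _ (by omega) (by omega) hij
    omega


lemma cycAdj {i : ℕ} (hi : i < nTot S h12 h23 h31) :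
    H.Adj ((W0 S h12 h23 h31).getVert i) ((W0 S h12 h23 h31).getVert (i + 1)) :=
  SimpleGraph.Walk.adj_getVert_succ _ (by rw [W0_len]; exact hi)

/-- adjacency on the cycle only happens at (cyclically) consecutive positions. -/
lemma cycNonadj {i j : ℕ} (hi : i < nTot S h12 h23 h31) (hj : j < nTot S h12 h23 h31)
    (hadj : H.Adj ((W0 S h12 h23 h31).getVert i) ((W0 S h12 h23 h31).getVert j)) :
    i + 1 = j ∨ j + 1 = i ∨ (i = 0 ∧ j = nTot S h12 h23 h31 - 1) ∨
      (j = 0 ∧ i = nTot S h12 h23 h31 - 1) := by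
  have l1 := pth_len S h12; have l2 := pth_len S h23; have l3 := pth_len S h31
  have h13 : t1 ≠ t3 := fun h => h31 h.symm
  obtain ⟨a, b, h, k, hk, hx, hy⟩ := edge_loc S hadj
  by_cases hm1 : (a = t1 ∧ b = t2) ∨ (a = t2 ∧ b = t1)
  · rcases hm1 with ⟨rfl, rfl⟩ | ⟨rfl, rfl⟩
    · have hpq : pth S h = pth S h12 := rfl
      rw [hpq] at hk hx hy
      have hik : i = k := cycInj S h12 h23 h31 hi (by rw [nTot]; omega)
        (by rw [hx, seg1 S h12 h23 h31 (by omega)])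
      have hjk : j = k + 1 := cycInj S h12 h23 h31 hj (by rw [nTot]; omega)
        (by rw [hy, seg1 S h12 h23 h31 (by omega)])
      omega
    · have hpq : pth S h = (pth S h12).reverse := pth_rev S h12
      rw [hpq, SimpleGraph.Walk.getVert_reverse] at hx hy
      rw [hpq, SimpleGraph.Walk.length_reverse] at hk
      have hik : i = (pth S h12).length - k := cycInj S h12 h23 h31 hi
        (by rw [nTot]; omega) (by rw [hx, seg1 S h12 h23 h31 (by omega)])
      have hjk : j = (pth S h12).length - (k + 1) := cycInj S h12 h23 h31 hj
        (by rw [nTot]; omega) (by rw [hy, seg1 S h12 h23 h31 (by omega)])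
      omega
  by_cases hm2 : (a = t2 ∧ b = t3) ∨ (a = t3 ∧ b = t2)
  · rcases hm2 with ⟨rfl, rfl⟩ | ⟨rfl, rfl⟩
    · have hpq : pth S h = pth S h23 := rfl
      rw [hpq] at hk hx hy
      have hik : i = (pth S h12).length + k := cycInj S h12 h23 h31 hi
        (by rw [nTot]; omega) (by rw [hx, seg2 S h12 h23 h31 (by omega)])
      have hjk : j = (pth S h12).length + (k + 1) := cycInj S h12 h23 h31 hj
        (by rw [nTot]; omega) (by rw [hy, seg2 S h12 h23 h31 (by omega)])
      omega
    · have hpq : pth S h = (pth S h23).reverse := pth_rev S h23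
      rw [hpq, SimpleGraph.Walk.getVert_reverse] at hx hy
      rw [hpq, SimpleGraph.Walk.length_reverse] at hk
      have hik : i = (pth S h12).length + ((pth S h23).length - k) :=
        cycInj S h12 h23 h31 hi (by rw [nTot]; omega)
          (by rw [hx, seg2 S h12 h23 h31 (by omega)])
      have hjk : j = (pth S h12).length + ((pth S h23).length - (k + 1)) :=
        cycInj S h12 h23 h31 hj (by rw [nTot]; omega)
          (by rw [hy, seg2 S h12 h23 h31 (by omega)])
      omega
  by_cases hm3 : (a = t3 ∧ b = t1) ∨ (a = t1 ∧ b = t3)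
  · rcases hm3 with ⟨rfl, rfl⟩ | ⟨rfl, rfl⟩
    · have hpq : pth S h = pth S h31 := rfl
      rw [hpq] at hk hx hy
      have hik : i = (pth S h12).length + (pth S h23).length + k :=
        cycInj S h12 h23 h31 hi (by rw [nTot]; omega)
          (by rw [hx, seg3 S h12 h23 h31 (by omega)])
      by_cases hkl : k + 1 = (pth S h31).length
      · have hj0 : j = 0 := cycInj S h12 h23 h31 hj (by rw [nTot]; omega)
          (by rw [hy, hkl, SimpleGraph.Walk.getVert_length, gv_zero])
        right; right; right
        constructor
        · exact hj0
        · rw [nTot]; omega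
      · have hjk : j = (pth S h12).length + (pth S h23).length + (k + 1) :=
          cycInj S h12 h23 h31 hj (by rw [nTot]; omega)
            (by rw [hy, seg3 S h12 h23 h31 (by omega)])
        omega
    · have hpq : pth S h = (pth S h31).reverse := pth_rev S h31
      rw [hpq, SimpleGraph.Walk.getVert_reverse] at hx hy
      rw [hpq, SimpleGraph.Walk.length_reverse] at hk
      by_cases hk0 : k = 0
      · subst hk0
        have hi0 : i = 0 := cycInj S h12 h23 h31 hi (by rw [nTot]; omega)
          (by rw [hx]; simp only [Nat.sub_zero]
              rw [SimpleGraph.Walk.getVert_length, gv_zero])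
        have hjk : j = (pth S h12).length + (pth S h23).length + ((pth S h31).length - 1) :=
          cycInj S h12 h23 h31 hj (by rw [nTot]; omega)
            (by rw [hy, seg3 S h12 h23 h31 (by omega)])
        right; right; left
        exact ⟨hi0, by rw [nTot]; omega⟩
      · have hik : i = (pth S h12).length + (pth S h23).length + ((pth S h31).length - k) :=
          cycInj S h12 h23 h31 hi (by rw [nTot]; omega)
            (by rw [hx, seg3 S h12 h23 h31 (by omega)])
        have hjk : j = (pth S h12).length + (pth S h23).length +
            ((pth S h31).length - (k + 1)) :=
          cycInj S h12 h23 h31 hj (by rw [nTot]; omega)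
            (by rw [hy, seg3 S h12 h23 h31 (by omega)])
        omega
  · -- the edge lies on a path not in the triangle: both ends are branch vertices
    exfalso
    have hxs : (W0 S h12 h23 h31).getVert i ∈ (pth S h).support := by
      rw [hx]
      exact SimpleGraph.Walk.mem_support_iff_exists_getVert.2 ⟨k, rfl, by omega⟩
    have hys : (W0 S h12 h23 h31).getVert j ∈ (pth S h).support := by
      rw [hy]
      exact SimpleGraph.Walk.mem_support_iff_exists_getVert.2 ⟨k + 1, rfl, by omega⟩
    have hbr : ∀ r : ℕ, r < nTot S h12 h23 h31 →
        (W0 S h12 h23 h31).getVert r ∈ (pth S h).support →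
        ∃ e, (W0 S h12 h23 h31).getVert r = S.f e := by
      intro r hr hrs
      rcases memcyc S h12 h23 h31 (le_of_lt hr) with hc | hc | hc
      · have := supp_shared S h h12 hrs hc (by tauto)
        rcases this.1 with h' | h' <;> exact ⟨_, h'⟩
      · have := supp_shared S h h23 hrs hc (by tauto)
        rcases this.1 with h' | h' <;> exact ⟨_, h'⟩
      · have := supp_shared S h h31 hrs hc (by tauto)
        rcases this.1 with h' | h' <;> exact ⟨_, h'⟩
    obtain ⟨e1, he1⟩ := hbr i hi hxs
    obtain ⟨e2, he2⟩ := hbr j hj hys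
    rw [he1, he2] at hadj
    exact branch_nonadj S e1 e2 hadj


lemma crs_or (F : W → Box) (hrep : IsFrameRepresentation H F) {x y : W} (hadj : H.Adj x y) :
    FrameProof.Crs (F x) (F y) ∨ FrameProof.Crs (F y) (F x) := by
  obtain ⟨pt, h1, h2⟩ := frames_meet F hrep hadj
  have hne := hadj.ne
  refine FrameProof.crs_of_meet ?_ ?_ ?_ ?_ ?_ ?_ h1 h2
  · exact fun q hq1 hq2 =>
      (Set.eq_empty_iff_forall_notMem.1 (hrep.corner_free x y hne) q) ⟨hq1, hq2⟩
  · exact fun q hq1 hq2 =>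
      (Set.eq_empty_iff_forall_notMem.1 (hrep.corner_free y x hne.symm) q) ⟨hq1, hq2⟩
  · exact fun q hq1 hq2 =>
      (Set.eq_empty_iff_forall_notMem.1 (hrep.left_free x y hne) q) ⟨hq1, hq2⟩
  · exact fun q hq1 hq2 =>
      (Set.eq_empty_iff_forall_notMem.1 (hrep.left_free y x hne.symm) q) ⟨hq1, hq2⟩
  · exact hrep.right_cross x y hne
  · exact hrep.right_cross y x hne.symm

lemma chain_prop (F : W → Box) (hrep : IsFrameRepresentation H F) (vB : W) (g : ℕ → W)
    (N : ℕ) (hadj : ∀ t, t < N → H.Adj (g t) (g (t + 1)))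
    (hgood : ∀ t, 1 ≤ t → t ≤ N → g t ≠ vB ∧ ¬ H.Adj vB (g t))
    (hseed : FrameProof.SIn (F (g 0)) (F vB)) :
    ∀ t, t ≤ N → FrameProof.SIn (F (g t)) (F vB) := by
  intro t
  induction t with
  | zero => exact fun _ => hseed
  | succ t ih =>
    intro ht
    have h1 := ih (by omega)
    obtain ⟨pt, hp1, hp2⟩ := frames_meet F hrep (hadj t (by omega))
    have hg := hgood (t + 1) (by omega) ht
    exact FrameProof.sin_trans_meet h1 hp2 hp1.1
      (fun r hr1 hr2 => frames_disj F hrep hg.1 (fun hq => hg.2 hq.symm) r hr1 hr2)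

lemma cyc_big (F : W → Box) (hrep : IsFrameRepresentation H F) :
    ∃ vb, (vb ∈ (pth S h12).support ∨ vb ∈ (pth S h23).support ∨
        vb ∈ (pth S h31).support) ∧
      ∀ z, (z ∈ (pth S h12).support ∨ z ∈ (pth S h23).support ∨
          z ∈ (pth S h31).support) →
        Gd H vb z → FrameProof.SIn (F z) (F vb) := by
  have hn9 := nTot_ge S h12 h23 h31
  obtain ⟨i0, hi0mem, hmax⟩ := Finset.exists_max_image (Finset.range (nTot S h12 h23 h31))
    (fun i => (F ((W0 S h12 h23 h31).getVert i)).x2) ⟨0, Finset.mem_range.2 (by omega)⟩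
  rw [Finset.mem_range] at hi0mem
  have hmax' : ∀ r, r < nTot S h12 h23 h31 →
      (F ((W0 S h12 h23 h31).getVert r)).x2 ≤ (F ((W0 S h12 h23 h31).getVert i0)).x2 :=
    fun r hr => hmax r (Finset.mem_range.2 hr)
  obtain ⟨s, hs, hseq, hsv⟩ : ∃ s, s < nTot S h12 h23 h31 ∧
      (i0 + 1 = s ∨ i0 + 1 = s + nTot S h12 h23 h31) ∧
      (W0 S h12 h23 h31).getVert s = (W0 S h12 h23 h31).getVert (i0 + 1) := by
    by_cases h1 : i0 + 1 < nTot S h12 h23 h31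
    · exact ⟨i0 + 1, h1, Or.inl rfl, rfl⟩
    · refine ⟨0, by omega, Or.inr (by omega), ?_⟩
      have h2 : i0 + 1 = nTot S h12 h23 h31 := by omega
      rw [h2, gv_zero S h12 h23 h31, gv_n S h12 h23 h31]
  obtain ⟨p, hp, hpeq, hpv⟩ : ∃ p, p < nTot S h12 h23 h31 ∧
      (p + 1 = i0 ∨ p + 1 = i0 + nTot S h12 h23 h31) ∧
      (W0 S h12 h23 h31).getVert (p + 1) = (W0 S h12 h23 h31).getVert i0 := by
    by_cases h1 : 0 < i0
    · exact ⟨i0 - 1, by omega, Or.inl (by omega), by congr 1; omega⟩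
    · have h2 : i0 = 0 := by omega
      subst h2
      refine ⟨nTot S h12 h23 h31 - 1, by omega, Or.inr (by omega), ?_⟩
      have h3 : nTot S h12 h23 h31 - 1 + 1 = nTot S h12 h23 h31 := by omega
      rw [h3, gv_n S h12 h23 h31, gv_zero S h12 h23 h31]
  have hAm : H.Adj ((W0 S h12 h23 h31).getVert i0) ((W0 S h12 h23 h31).getVert s) := by
    have h0 := cycAdj S h12 h23 h31 hi0mem
    rw [← hsv] at h0
    exact h0
  have hBm : H.Adj ((W0 S h12 h23 h31).getVert p) ((W0 S h12 h23 h31).getVert i0) := by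
    have h0 := cycAdj S h12 h23 h31 hp
    rw [hpv] at h0
    exact h0
  have hCA : FrameProof.Crs (F ((W0 S h12 h23 h31).getVert s))
      (F ((W0 S h12 h23 h31).getVert i0)) := by
    rcases crs_or F hrep hAm with h' | h'
    · exfalso
      have := FrameProof.crs_x2_lt h'
      have := hmax' s hs
      linarith
    · exact h'
  have hCB : FrameProof.Crs (F ((W0 S h12 h23 h31).getVert p))
      (F ((W0 S h12 h23 h31).getVert i0)) := by
    rcases crs_or F hrep hBm with h' | h'
    · exact h'
    · exfalso
      have := FrameProof.crs_x2_lt h'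
      have := hmax' p hp
      linarith
  have hspne : s ≠ p := by omega
  have hABne : (W0 S h12 h23 h31).getVert s ≠ (W0 S h12 h23 h31).getVert p :=
    fun h => hspne (cycInj S h12 h23 h31 hs hp h)
  have hABnadj : ¬ H.Adj ((W0 S h12 h23 h31).getVert s) ((W0 S h12 h23 h31).getVert p) := by
    intro hA
    rcases cycNonadj S h12 h23 h31 hs hp hA with h' | h' | ⟨h', h''⟩ | ⟨h', h''⟩ <;> omega
  have hmeet := FrameProof.crs_regions_meet hCA hCB
  have hcases := FrameProof.disjoint_frames_cases
    (fun q hq1 hq2 => frames_disj F hrep hABne hABnadj q hq1 hq2) hmeet.1 hmeet.2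
  have hadjg : ∀ t, t < nTot S h12 h23 h31 - 1 →
      H.Adj ((W0 S h12 h23 h31).getVert
          (if s + t < nTot S h12 h23 h31 then s + t else s + t - nTot S h12 h23 h31))
        ((W0 S h12 h23 h31).getVert
          (if s + t + 1 < nTot S h12 h23 h31 then s + t + 1
            else s + t + 1 - nTot S h12 h23 h31)) := by
    intro t ht
    by_cases h1 : s + t + 1 < nTot S h12 h23 h31
    · have h2 : s + t < nTot S h12 h23 h31 := by omega
      rw [if_pos h1, if_pos h2]
      exact cycAdj S h12 h23 h31 h2
    · by_cases h2 : s + t < nTot S h12 h23 h31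
      · rw [if_pos h2, if_neg h1]
        have h3 : s + t = nTot S h12 h23 h31 - 1 := by omega
        have h4 : s + t + 1 - nTot S h12 h23 h31 = 0 := by omega
        rw [h4]
        have h5 := cycAdj S h12 h23 h31 (show nTot S h12 h23 h31 - 1 < nTot S h12 h23 h31
          by omega)
        have h6 : nTot S h12 h23 h31 - 1 + 1 = nTot S h12 h23 h31 := by omega
        rw [h6, gv_n S h12 h23 h31] at h5
        rw [h3, gv_zero S h12 h23 h31]
        exact h5
      · rw [if_neg h2, if_neg h1]
        have h3 : s + t - nTot S h12 h23 h31 < nTot S h12 h23 h31 := by omega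
        have h4 : s + t + 1 - nTot S h12 h23 h31 = (s + t - nTot S h12 h23 h31) + 1 := by
          omega
        rw [h4]
        exact cycAdj S h12 h23 h31 h3
  rcases hcases with hAB | hBA
  · -- the predecessor is the big vertex
    have hgood : ∀ t, 1 ≤ t → t ≤ nTot S h12 h23 h31 - 4 →
        (W0 S h12 h23 h31).getVert
            (if s + t < nTot S h12 h23 h31 then s + t else s + t - nTot S h12 h23 h31) ≠
          (W0 S h12 h23 h31).getVert p ∧
        ¬ H.Adj ((W0 S h12 h23 h31).getVert p) ((W0 S h12 h23 h31).getVert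
            (if s + t < nTot S h12 h23 h31 then s + t else s + t - nTot S h12 h23 h31)) := by
      intro t ht1 ht2
      obtain ⟨it, hitdef, hitlt, hitrel⟩ : ∃ it,
          (if s + t < nTot S h12 h23 h31 then s + t else s + t - nTot S h12 h23 h31) = it ∧
          it < nTot S h12 h23 h31 ∧ (s + t = it ∨ s + t = it + nTot S h12 h23 h31) := by
        by_cases h1 : s + t < nTot S h12 h23 h31
        · exact ⟨s + t, if_pos h1, h1, Or.inl rfl⟩
        · exact ⟨s + t - nTot S h12 h23 h31, if_neg h1, by omega, Or.inr (by omega)⟩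
      rw [hitdef]
      constructor
      · intro hq
        have := cycInj S h12 h23 h31 hitlt hp hq
        omega
      · intro hA
        rcases cycNonadj S h12 h23 h31 hp hitlt hA with h' | h' | ⟨h', h''⟩ | ⟨h', h''⟩ <;>
          omega
    have hseed : FrameProof.SIn (F ((W0 S h12 h23 h31).getVert
        (if s + 0 < nTot S h12 h23 h31 then s + 0 else s + 0 - nTot S h12 h23 h31)))
        (F ((W0 S h12 h23 h31).getVert p)) := by
      have e : (if s + 0 < nTot S h12 h23 h31 then s + 0 else s + 0 - nTot S h12 h23 h31)
          = s := by split_ifs <;> omega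
      rw [e]
      exact hAB
    have hchain := chain_prop F hrep ((W0 S h12 h23 h31).getVert p)
      (fun t => (W0 S h12 h23 h31).getVert
        (if s + t < nTot S h12 h23 h31 then s + t else s + t - nTot S h12 h23 h31))
      (nTot S h12 h23 h31 - 4) (fun t ht => hadjg t (by omega)) hgood hseed
    refine ⟨(W0 S h12 h23 h31).getVert p, memcyc S h12 h23 h31 (le_of_lt hp), ?_⟩
    intro z hz hgd
    obtain ⟨iz, hiz, hize⟩ := suppcyc S h12 h23 h31 hz
    obtain ⟨tz, htzlt, htzrel⟩ : ∃ tz, tz < nTot S h12 h23 h31 ∧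
        (s + tz = iz ∨ s + tz = iz + nTot S h12 h23 h31) := by
      by_cases h1 : s ≤ iz
      · exact ⟨iz - s, by omega, Or.inl (by omega)⟩
      · exact ⟨iz + nTot S h12 h23 h31 - s, by omega, Or.inr (by omega)⟩
    by_cases htz1 : tz = nTot S h12 h23 h31 - 1
    · exfalso
      apply hgd.2
      have hizi0 : iz = i0 := by omega
      rw [← hize, hizi0]
      exact hBm
    by_cases htz2 : tz = nTot S h12 h23 h31 - 2
    · exfalso
      apply hgd.1
      have hizp : iz = p := by omega
      rw [← hize, hizp]
    by_cases htz3 : tz = nTot S h12 h23 h31 - 3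
    · exfalso
      apply hgd.2
      have h5 := hadjg tz (by omega)
      have e1 : (if s + tz < nTot S h12 h23 h31 then s + tz
          else s + tz - nTot S h12 h23 h31) = iz := by split_ifs <;> omega
      have e2 : (if s + tz + 1 < nTot S h12 h23 h31 then s + tz + 1
          else s + tz + 1 - nTot S h12 h23 h31) = p := by split_ifs <;> omega
      rw [e1, e2] at h5
      rw [← hize]
      exact h5.symm
    · have h5 := hchain tz (by omega)
      have e1 : (if s + tz < nTot S h12 h23 h31 then s + tz
          else s + tz - nTot S h12 h23 h31) = iz := by split_ifs <;> omega
      simp only [e1, hize] at h5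
      exact h5
  · -- the successor is the big vertex
    have hgood' : ∀ t, 1 ≤ t → t ≤ nTot S h12 h23 h31 - 4 →
        (W0 S h12 h23 h31).getVert
            (if s + (nTot S h12 h23 h31 - 2 - t) < nTot S h12 h23 h31
              then s + (nTot S h12 h23 h31 - 2 - t)
              else s + (nTot S h12 h23 h31 - 2 - t) - nTot S h12 h23 h31) ≠
          (W0 S h12 h23 h31).getVert s ∧
        ¬ H.Adj ((W0 S h12 h23 h31).getVert s) ((W0 S h12 h23 h31).getVert
            (if s + (nTot S h12 h23 h31 - 2 - t) < nTot S h12 h23 h31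
              then s + (nTot S h12 h23 h31 - 2 - t)
              else s + (nTot S h12 h23 h31 - 2 - t) - nTot S h12 h23 h31)) := by
      intro t ht1 ht2
      obtain ⟨it, hitdef, hitlt, hitrel⟩ : ∃ it,
          (if s + (nTot S h12 h23 h31 - 2 - t) < nTot S h12 h23 h31
            then s + (nTot S h12 h23 h31 - 2 - t)
            else s + (nTot S h12 h23 h31 - 2 - t) - nTot S h12 h23 h31) = it ∧
          it < nTot S h12 h23 h31 ∧
          (s + (nTot S h12 h23 h31 - 2 - t) = it ∨
            s + (nTot S h12 h23 h31 - 2 - t) = it + nTot S h12 h23 h31) := by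
        by_cases h1 : s + (nTot S h12 h23 h31 - 2 - t) < nTot S h12 h23 h31
        · exact ⟨_, if_pos h1, h1, Or.inl rfl⟩
        · exact ⟨_, if_neg h1, by omega, Or.inr (by omega)⟩
      rw [hitdef]
      constructor
      · intro hq
        have := cycInj S h12 h23 h31 hitlt hs hq
        omega
      · intro hA
        rcases cycNonadj S h12 h23 h31 hs hitlt hA with h' | h' | ⟨h', h''⟩ | ⟨h', h''⟩ <;>
          omega
    have hadj' : ∀ t, t < nTot S h12 h23 h31 - 4 →
        H.Adj ((W0 S h12 h23 h31).getVert
            (if s + (nTot S h12 h23 h31 - 2 - t) < nTot S h12 h23 h31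
              then s + (nTot S h12 h23 h31 - 2 - t)
              else s + (nTot S h12 h23 h31 - 2 - t) - nTot S h12 h23 h31))
          ((W0 S h12 h23 h31).getVert
            (if s + (nTot S h12 h23 h31 - 2 - (t + 1)) < nTot S h12 h23 h31
              then s + (nTot S h12 h23 h31 - 2 - (t + 1))
              else s + (nTot S h12 h23 h31 - 2 - (t + 1)) - nTot S h12 h23 h31)) := by
      intro t ht
      have h5 := hadjg (nTot S h12 h23 h31 - 3 - t) (by omega)
      have e1 : s + (nTot S h12 h23 h31 - 3 - t) + 1 =
          s + (nTot S h12 h23 h31 - 2 - t) := by omega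
      have e2 : nTot S h12 h23 h31 - 3 - t = nTot S h12 h23 h31 - 2 - (t + 1) := by omega
      rw [e1, e2] at h5
      exact h5.symm
    have hseed' : FrameProof.SIn (F ((W0 S h12 h23 h31).getVert
        (if s + (nTot S h12 h23 h31 - 2 - 0) < nTot S h12 h23 h31
          then s + (nTot S h12 h23 h31 - 2 - 0)
          else s + (nTot S h12 h23 h31 - 2 - 0) - nTot S h12 h23 h31)))
        (F ((W0 S h12 h23 h31).getVert s)) := by
      have e : (if s + (nTot S h12 h23 h31 - 2 - 0) < nTot S h12 h23 h31
          then s + (nTot S h12 h23 h31 - 2 - 0)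
          else s + (nTot S h12 h23 h31 - 2 - 0) - nTot S h12 h23 h31) = p := by
        split_ifs <;> omega
      rw [e]
      exact hBA
    have hchain' := chain_prop F hrep ((W0 S h12 h23 h31).getVert s)
      (fun t => (W0 S h12 h23 h31).getVert
        (if s + (nTot S h12 h23 h31 - 2 - t) < nTot S h12 h23 h31
          then s + (nTot S h12 h23 h31 - 2 - t)
          else s + (nTot S h12 h23 h31 - 2 - t) - nTot S h12 h23 h31))
      (nTot S h12 h23 h31 - 4) hadj' hgood' hseed'
    refine ⟨(W0 S h12 h23 h31).getVert s, memcyc S h12 h23 h31 (le_of_lt hs), ?_⟩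
    intro z hz hgd
    obtain ⟨iz, hiz, hize⟩ := suppcyc S h12 h23 h31 hz
    obtain ⟨tz, htzlt, htzrel⟩ : ∃ tz, tz < nTot S h12 h23 h31 ∧
        (s + tz = iz ∨ s + tz = iz + nTot S h12 h23 h31) := by
      by_cases h1 : s ≤ iz
      · exact ⟨iz - s, by omega, Or.inl (by omega)⟩
      · exact ⟨iz + nTot S h12 h23 h31 - s, by omega, Or.inr (by omega)⟩
    by_cases htz1 : tz = 0
    · exfalso
      apply hgd.1
      have hizs : iz = s := by omega
      rw [← hize, hizs]
    by_cases htz2 : tz = 1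
    · exfalso
      apply hgd.2
      have h5 := hadjg 0 (by omega)
      have e1 : (if s + 0 < nTot S h12 h23 h31 then s + 0
          else s + 0 - nTot S h12 h23 h31) = s := by split_ifs <;> omega
      have e2 : (if s + 0 + 1 < nTot S h12 h23 h31 then s + 0 + 1
          else s + 0 + 1 - nTot S h12 h23 h31) = iz := by split_ifs <;> omega
      rw [e1, e2] at h5
      rw [← hize]
      exact h5
    by_cases htz3 : tz = nTot S h12 h23 h31 - 1
    · exfalso
      apply hgd.2
      have hizi0 : iz = i0 := by omega
      rw [← hize, hizi0]
      exact hAm.symm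
    · have h5 := hchain' (nTot S h12 h23 h31 - 2 - tz) (by omega)
      have e1 : (if s + (nTot S h12 h23 h31 - 2 - (nTot S h12 h23 h31 - 2 - tz)) <
            nTot S h12 h23 h31
          then s + (nTot S h12 h23 h31 - 2 - (nTot S h12 h23 h31 - 2 - tz))
          else s + (nTot S h12 h23 h31 - 2 - (nTot S h12 h23 h31 - 2 - tz)) -
            nTot S h12 h23 h31) = iz := by
        split_ifs <;> omega
      simp only [e1, hize] at h5
      exact h5


end SubdivProof


/-- No `≥2`-subdivision of `K₄` is a restricted frame graph. -/
theorem no_ge_two_subdivision_K4_isRestrictedFrameGraph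
    {W : Type} [Fintype W] (H : SimpleGraph W)
    (hsub : IsSubdivisionGE (⊤ : SimpleGraph (Fin 4)).toMultigraph 2 H) :
    ¬ IsRestrictedFrameGraph H := by
  rintro ⟨F, hrep⟩
  obtain ⟨S⟩ := hsub
  have h01 : (0 : Fin 4) ≠ 1 := by decide
  have h12 : (1 : Fin 4) ≠ 2 := by decide
  have h20 : (2 : Fin 4) ≠ 0 := by decide
  obtain ⟨v, hvmem, hvbig⟩ := SubdivProof.cyc_big S h01 h12 h20 F hrep
  have hGB1 : ∀ z, SubdivProof.Gd H v z → FrameProof.SIn (F z) (F v) :=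
    SubdivProof.glob S F hrep h01 h12 h20 hvbig
  obtain ⟨t1, t2, t3, d12, d23, d31, havoid⟩ := SubdivProof.avoid_cycle S v
  obtain ⟨v', hv'mem, hv'big⟩ := SubdivProof.cyc_big S d12 d23 d31 F hrep
  have hGB2 : ∀ z, SubdivProof.Gd H v' z → FrameProof.SIn (F z) (F v') :=
    SubdivProof.glob S F hrep d12 d23 d31 hv'big
  have hgd : SubdivProof.Gd H v v' := havoid v' hv'mem
  have h1 : FrameProof.SIn (F v') (F v) := hGB1 v' hgd
  have h2 : FrameProof.SIn (F v) (F v') :=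
    hGB2 v ⟨fun h => hgd.1 h.symm, fun h => hgd.2 h.symm⟩
  exact FrameProof.sin_mutual_absurd h1 h2
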